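/- arXiv:2106.02438 — 8 statements merged into one kernel-verified Lean document; each statement's English description precedes it below -/
import Mathlib

section
/- (Turán's theorem, edge-count form) Let G be a finite graph with independence number α, and let l > α. Then every set W of l vertices of G induces at least l²/(2α) − l/2 edges. -/
/-- The Johnson-type graph `G(n,r,s)`: vertices are the `r`-element subsets of
`{1,…,n}` (modeled as `Finset (Fin n)` of cardinality `r`), two distinct vertices
adjacent iff their intersection has size exactly `s`. -/
def johnson (n r s : ℕ) : SimpleGraph {A : Finset (Fin n) // A.card = r} where
  Adj A B := A ≠ B ∧ (A.1 ∩ B.1).card = s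
  symm := by
    constructor
    intro A B h
    exact ⟨h.1.symm, by rw [Finset.inter_comm]; exact h.2⟩
  loopless := by constructor; intro A h; exact h.1 rfl

instance (n r s : ℕ) : DecidableRel (johnson n r s).Adj := fun A B =>
  inferInstanceAs (Decidable (A ≠ B ∧ (A.1 ∩ B.1).card = s))

/-- `Γ` is an independent set of vertices in `G`. -/
def IsIndep {V : Type*} (G : SimpleGraph V) (Γ : Finset V) : Prop :=
  ∀ x ∈ Γ, ∀ y ∈ Γ, ¬ G.Adj x y

/-- The number of edges of `G` with both endpoints in `W`. -/
def edgeCount {V : Type*} [DecidableEq V] (G : SimpleGraph V) [DecidableRel G.Adj]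
    (W : Finset V) : ℕ :=
  ((W ×ˢ W).filter fun p => G.Adj p.1 p.2).card / 2

lemma even_card_of_invol {β : Type*} [DecidableEq β] (f : β → β) (hf : ∀ x, f (f x) = x)
    (F : Finset β) (hcl : ∀ x ∈ F, f x ∈ F) (hfix : ∀ x ∈ F, f x ≠ x) : Even F.card := by
  induction F using Finset.strongInduction with
  | _ F ih =>
    rcases F.eq_empty_or_nonempty with rfl | ⟨a, ha⟩
    · simp
    · set F' := F \ {a, f a} with hF'
      have hsub : F' ⊂ F :=
        Finset.sdiff_ssubset (by simp [Finset.insert_subset_iff, ha, hcl a ha]) (by simp)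
      have hcl' : ∀ x ∈ F', f x ∈ F' := by
        intro x hx
        simp only [hF', Finset.mem_sdiff, Finset.mem_insert, Finset.mem_singleton] at hx ⊢
        push_neg at hx ⊢
        refine ⟨hcl x hx.1, ?_, ?_⟩
        · intro h; exact hx.2.2 (by rw [← h, hf])
        · intro h; apply hx.2.1; have := congrArg f h; rwa [hf, hf] at this
      have hE := ih F' hsub (hcl') (fun x hx => hfix x (Finset.mem_sdiff.mp hx).1)
      have hcard : F.card = F'.card + 2 := by
        have h1 : ({a, f a} : Finset β) ⊆ F := by
          simp [Finset.insert_subset_iff, ha, hcl a ha]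
        have h2 : ({a, f a} : Finset β).card = 2 := by
          rw [Finset.card_insert_of_notMem (by simp [Ne.symm (hfix a ha)]),
            Finset.card_singleton]
        have := Finset.card_sdiff_of_subset h1
        rw [hF', this, h2]
        have := Finset.card_le_card h1
        omega
      rw [hcard]
      exact hE.add (by decide)

instance IsIndep.dec {V : Type*} (G : SimpleGraph V) [DecidableRel G.Adj] :
    DecidablePred (IsIndep G) := fun S =>
  decidable_of_iff (∀ x ∈ S, ∀ y ∈ S, ¬ G.Adj x y) Iff.rfl

lemma turan_key {V : Type*} [DecidableEq V] (G : SimpleGraph V) [DecidableRel G.Adj]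
    (α : ℕ) (hα : 0 < α) (hα_max : ∀ Γ : Finset V, IsIndep G Γ → Γ.card ≤ α) (W : Finset V) :
    (W.card : ℝ) ^ 2 / α - W.card ≤ (((W ×ˢ W).filter fun p => G.Adj p.1 p.2).card : ℝ) := by
  induction W using Finset.strongInduction with
  | _ W ih =>
    have hα' : (0:ℝ) < α := by exact_mod_cast hα
    by_cases hle : W.card ≤ α
    · have hcast : (W.card : ℝ) ≤ α := by exact_mod_cast hle
      have h0 : (W.card : ℝ) ^ 2 / α - W.card ≤ 0 := by
        rw [div_sub' (ne_of_gt hα'), div_nonpos_iff]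
        right
        refine ⟨by nlinarith [Nat.cast_nonneg (α := ℝ) W.card], by linarith⟩
      exact h0.trans (Nat.cast_nonneg _)
    push_neg at hle
    have hWne : W.Nonempty := Finset.card_pos.mp (by omega)
    obtain ⟨S, hSmem, hSmax⟩ := Finset.exists_max_image
      (W.powerset.filter fun S => IsIndep G S) Finset.card
      ⟨∅, Finset.mem_filter.mpr ⟨Finset.empty_mem_powerset _, fun x hx => absurd hx (Finset.notMem_empty x)⟩⟩
    rw [Finset.mem_filter, Finset.mem_powerset] at hSmem
    obtain ⟨hSW, hSind⟩ := hSmem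
    have hSne : S.Nonempty := by
      obtain ⟨x, hx⟩ := hWne
      have h1 : ({x} : Finset V) ∈ W.powerset.filter fun S => IsIndep G S := by
        simp only [Finset.mem_filter, Finset.mem_powerset]
        exact ⟨Finset.singleton_subset_iff.mpr hx, by
          intro a ha b hb
          simp only [Finset.mem_singleton] at ha hb
          subst ha; subst hb; exact G.loopless.irrefl _⟩
      have := hSmax _ h1
      simp only [Finset.card_singleton] at this
      exact Finset.card_pos.mp (by omega)
    have hSα : S.card ≤ α := hα_max S hSind
    set W' := W \ S with hW'
    have hW'ss : W' ⊂ W := Finset.sdiff_ssubset hSW hSne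
    have hnbr0 : ∀ v ∈ W', ∃ u ∈ S, G.Adj v u := by
      intro v hv
      by_contra hno
      push_neg at hno
      have hvS : v ∉ S := (Finset.mem_sdiff.mp hv).2
      have hvW : v ∈ W := (Finset.mem_sdiff.mp hv).1
      have hins : IsIndep G (insert v S) := by
        intro x hx y hy
        rcases Finset.mem_insert.mp hx with hx1 | hx1 <;>
          rcases Finset.mem_insert.mp hy with hy1 | hy1
        · subst hx1; subst hy1; exact G.loopless.irrefl _
        · subst hx1; exact hno y hy1
        · subst hy1; intro h; exact hno x hx1 h.symm
        · exact hSind x hx1 y hy1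
      have h1 : insert v S ∈ W.powerset.filter fun S => IsIndep G S := by
        simp only [Finset.mem_filter, Finset.mem_powerset]
        exact ⟨Finset.insert_subset hvW hSW, hins⟩
      have := hSmax _ h1
      rw [Finset.card_insert_of_notMem hvS] at this
      omega
    have hnbr : ∀ v, ∃ u, v ∈ W' → u ∈ S ∧ G.Adj v u := by
      intro v
      by_cases hv : v ∈ W'
      · obtain ⟨u, hu1, hu2⟩ := hnbr0 v hv
        exact ⟨u, fun _ => ⟨hu1, hu2⟩⟩
      · exact ⟨v, fun h => absurd h hv⟩
    choose nbr hnbr using hnbr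
    set F := (W ×ˢ W).filter (fun p => G.Adj p.1 p.2) with hF
    set A := (W' ×ˢ W').filter (fun p => G.Adj p.1 p.2) with hA
    set B := (W' ×ˢ S).filter (fun p => G.Adj p.1 p.2) with hB
    set C := (S ×ˢ W').filter (fun p => G.Adj p.1 p.2) with hC
    have hsubW' : W' ⊆ W := hW'ss.subset
    have hABC : A ∪ B ∪ C ⊆ F := by
      intro p hp
      simp only [hA, hB, hC, hF, Finset.mem_union, Finset.mem_filter,
        Finset.mem_product] at hp ⊢
      rcases hp with (h | h) | h
      · exact ⟨⟨hsubW' h.1.1, hsubW' h.1.2⟩, h.2⟩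
      · exact ⟨⟨hsubW' h.1.1, hSW h.1.2⟩, h.2⟩
      · exact ⟨⟨hSW h.1.1, hsubW' h.1.2⟩, h.2⟩
    have hdisjS : ∀ x, x ∈ W' → x ∉ S := fun x hx => (Finset.mem_sdiff.mp hx).2
    have hdAB : Disjoint A B := by
      rw [Finset.disjoint_left]
      intro p hp hq
      simp only [hA, hB, Finset.mem_filter, Finset.mem_product] at hp hq
      exact hdisjS p.2 hp.1.2 hq.1.2
    have hdAC : Disjoint A C := by
      rw [Finset.disjoint_left]
      intro p hp hq
      simp only [hA, hC, Finset.mem_filter, Finset.mem_product] at hp hq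
      exact hdisjS p.1 hp.1.1 hq.1.1
    have hdBC : Disjoint B C := by
      rw [Finset.disjoint_left]
      intro p hp hq
      simp only [hB, hC, Finset.mem_filter, Finset.mem_product] at hp hq
      exact hdisjS p.1 hp.1.1 hq.1.1
    have hcardsum : A.card + B.card + C.card ≤ F.card := by
      calc A.card + B.card + C.card = (A ∪ B ∪ C).card := by
            rw [Finset.card_union_of_disjoint (Finset.disjoint_union_left.mpr ⟨hdAC, hdBC⟩),
              Finset.card_union_of_disjoint hdAB]
        _ ≤ F.card := Finset.card_le_card hABC
    have hBcard : W'.card ≤ B.card := by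
      apply Finset.card_le_card_of_injOn (fun v => (v, nbr v))
      · intro v hv
        simp only [hB, Finset.mem_coe, Finset.mem_filter, Finset.mem_product]
        exact ⟨⟨hv, (hnbr v hv).1⟩, (hnbr v hv).2⟩
      · intro x _ y _ h
        exact congrArg Prod.fst h
    have hCcard : W'.card ≤ C.card := by
      apply Finset.card_le_card_of_injOn (fun v => (nbr v, v))
      · intro v hv
        simp only [hC, Finset.mem_coe, Finset.mem_filter, Finset.mem_product]
        exact ⟨⟨(hnbr v hv).1, hv⟩, (hnbr v hv).2.symm⟩
      · intro x _ y _ h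
        exact congrArg Prod.snd h
    have hIH := ih W' hW'ss
    rw [← hA] at hIH
    have hcards : W'.card = W.card - S.card := Finset.card_sdiff_of_subset hSW
    have hsc : S.card ≤ W.card := Finset.card_le_card hSW
    have hcastW' : (W'.card : ℝ) = W.card - S.card := by
      rw [hcards]; push_cast [hsc]; ring
    have hcastSα : (S.card : ℝ) ≤ α := by exact_mod_cast hSα
    have hFge : (A.card : ℝ) + 2 * W'.card ≤ F.card := by
      have h0 : (A.card : ℝ) + B.card + C.card ≤ F.card := by exact_mod_cast hcardsum
      have hB' : (W'.card : ℝ) ≤ B.card := by exact_mod_cast hBcard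
      have hC' : (W'.card : ℝ) ≤ C.card := by exact_mod_cast hCcard
      linarith
    have hSpos : (0:ℝ) ≤ S.card := Nat.cast_nonneg _
    have hW'pos : (0:ℝ) ≤ W'.card := Nat.cast_nonneg _
    rw [div_sub' (ne_of_gt hα'), div_le_iff₀ hα'] at hIH ⊢
    nlinarith [hIH, hFge, hcastW', hcastSα, hSpos, hW'pos,
      mul_le_mul_of_nonneg_left hcastSα hSpos,
      mul_le_mul_of_nonneg_left hcastSα hW'pos]

theorem stmt1 {V : Type*} [Fintype V] [DecidableEq V] (G : SimpleGraph V)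
    [DecidableRel G.Adj] (α l : ℕ)
    (hα_ex : ∃ Γ : Finset V, IsIndep G Γ ∧ Γ.card = α)
    (hα_max : ∀ Γ : Finset V, IsIndep G Γ → Γ.card ≤ α)
    (hl : α < l) (W : Finset V) (hW : W.card = l) :
    (l : ℝ) ^ 2 / (2 * α) - l / 2 ≤ (edgeCount G W : ℝ) := by
  have hα : 0 < α := by
    have hWne : W.Nonempty := Finset.card_pos.mp (by omega)
    obtain ⟨x, hx⟩ := hWne
    have hind : IsIndep G {x} := by
      intro a ha b hb
      simp only [Finset.mem_singleton] at ha hb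
      subst ha; subst hb; exact G.loopless.irrefl _
    have := hα_max _ hind
    simp only [Finset.card_singleton] at this
    omega
  have hkey := turan_key G α hα hα_max W
  set F := (W ×ˢ W).filter (fun p => G.Adj p.1 p.2) with hF
  have heven : Even F.card := by
    apply even_card_of_invol Prod.swap (fun x => Prod.swap_swap x)
    · intro p hp
      simp only [hF, Finset.mem_filter, Finset.mem_product] at hp ⊢
      exact ⟨⟨hp.1.2, hp.1.1⟩, hp.2.symm⟩
    · intro p hp h
      simp only [hF, Finset.mem_filter] at hp
      have h1 : p.2 = p.1 := congrArg Prod.fst h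
      exact G.loopless.irrefl p.1 (h1 ▸ hp.2)
  have h2 : (edgeCount G W : ℝ) = (F.card : ℝ) / 2 := by
    obtain ⟨k, hk⟩ := heven
    unfold edgeCount
    rw [← hF, hk]
    have h3 : (k + k) / 2 = k := by omega
    rw [h3]
    push_cast
    ring
  rw [h2]
  rw [hW] at hkey
  have hα' : (0:ℝ) < α := by exact_mod_cast hα
  have h4 : (l:ℝ)^2 / (2*α) = ((l:ℝ)^2 / α) / 2 := by
    rw [div_div, mul_comm]
  rw [h4]
  linarith
end

section
/- Let Γ be a maximum-size independent set in the subgraph of G(n,r,s) induced on a vertex set W, and let u ∈ Γ. If v₁, v₂ ∈ W \ Γ are distinct vertices, each adjacent to exactly one vertex of Γ (namely u), and supp(v₁) and supp(v₂) agree in at least s+1 elements, then v₁ and v₂ are not adjacent and (Γ \ {u}) ∪ {v₁, v₂} is an independent set of size |Γ| + 1, a contradiction; hence no two such vertices exist. -/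
theorem stmt2 (n r s : ℕ)
    (W Γ : Finset {A : Finset (Fin n) // A.card = r})
    (hΓW : Γ ⊆ W) (hind : IsIndep (johnson n r s) Γ)
    (hmax : ∀ Γ' ⊆ W, IsIndep (johnson n r s) Γ' → Γ'.card ≤ Γ.card)
    (u : {A : Finset (Fin n) // A.card = r}) (hu : u ∈ Γ)
    (v₁ v₂ : {A : Finset (Fin n) // A.card = r})
    (hv₁ : v₁ ∈ W \ Γ) (hv₂ : v₂ ∈ W \ Γ) (hne : v₁ ≠ v₂)
    (h1 : Γ.filter (fun x => (johnson n r s).Adj x v₁) = {u})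
    (h2 : Γ.filter (fun x => (johnson n r s).Adj x v₂) = {u})
    (hagree : s + 1 ≤ (v₁.1 ∩ v₂.1).card) : False := by 
  obtain ⟨hv₁W, hv₁Γ⟩ := Finset.mem_sdiff.mp hv₁
  obtain ⟨hv₂W, hv₂Γ⟩ := Finset.mem_sdiff.mp hv₂
  -- v₁ and v₂ are not adjacent
  have hnadj : ¬ (johnson n r s).Adj v₁ v₂ := by
    rintro ⟨-, hc⟩
    omega
  -- only u among Γ is adjacent to v₁ (resp v₂)
  have key1 : ∀ x ∈ Γ, x ≠ u → ¬ (johnson n r s).Adj x v₁ := by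
    intro x hx hxu hadj
    exact hxu (Finset.mem_singleton.mp (h1 ▸ Finset.mem_filter.mpr ⟨hx, hadj⟩))
  have key2 : ∀ x ∈ Γ, x ≠ u → ¬ (johnson n r s).Adj x v₂ := by
    intro x hx hxu hadj
    exact hxu (Finset.mem_singleton.mp (h2 ▸ Finset.mem_filter.mpr ⟨hx, hadj⟩))
  set Γ' : Finset {A : Finset (Fin n) // A.card = r} :=
    insert v₁ (insert v₂ (Γ.erase u)) with hΓ'
  have hsub : Γ' ⊆ W := by
    intro x hx
    simp only [hΓ', Finset.mem_insert] at hx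
    rcases hx with rfl | rfl | hx
    · exact hv₁W
    · exact hv₂W
    · exact hΓW (Finset.mem_of_mem_erase hx)
  have hind' : IsIndep (johnson n r s) Γ' := by
    intro x hx y hy hadj
    simp only [hΓ', Finset.mem_insert] at hx hy
    rcases hx with rfl | rfl | hx <;> rcases hy with rfl | rfl | hy
    · exact (johnson n r s).loopless.irrefl _ hadj
    · exact hnadj hadj
    · exact key1 y (Finset.mem_of_mem_erase hy) (Finset.ne_of_mem_erase hy) hadj.symm
    · exact hnadj hadj.symm
    · exact (johnson n r s).loopless.irrefl _ hadj
    · exact key2 y (Finset.mem_of_mem_erase hy) (Finset.ne_of_mem_erase hy) hadj.symm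
    · exact key1 x (Finset.mem_of_mem_erase hx) (Finset.ne_of_mem_erase hx) hadj
    · exact key2 x (Finset.mem_of_mem_erase hx) (Finset.ne_of_mem_erase hx) hadj
    · exact hind x (Finset.mem_of_mem_erase hx) y (Finset.mem_of_mem_erase hy) hadj
  have hcard : Γ'.card = Γ.card + 1 := by
    have h2' : v₂ ∉ Γ.erase u := fun h => hv₂Γ (Finset.mem_of_mem_erase h)
    have h1' : v₁ ∉ insert v₂ (Γ.erase u) := by
      simp only [Finset.mem_insert]
      rintro (rfl | h)
      · exact hne rfl
      · exact hv₁Γ (Finset.mem_of_mem_erase h)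
    rw [hΓ', Finset.card_insert_of_notMem h1', Finset.card_insert_of_notMem h2',
      Finset.card_erase_of_mem hu]
    have : 1 ≤ Γ.card := Finset.card_pos.mpr ⟨u, hu⟩
    omega
  have := hmax Γ' hsub hind'
  omega
end

section
/- Fix r and s with r = 2s+1. Let Γ be a maximum independent set in the induced subgraph of G(n,r,s) on W. For u ∈ Γ, let U_{1,u} be the set of w ∈ W \ Γ whose unique neighbor in Γ is u. Then |U_{1,u}| ≤ C(r,s) · (n − r), where C(r,s) is the binomial coefficient 'r choose s'. -/
theorem stmt4 (n r s : ℕ) (hr : r = 2 * s + 1)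
    (W Γ : Finset {A : Finset (Fin n) // A.card = r})
    (hΓW : Γ ⊆ W) (hind : IsIndep (johnson n r s) Γ)
    (hmax : ∀ Γ' ⊆ W, IsIndep (johnson n r s) Γ' → Γ'.card ≤ Γ.card)
    (u : {A : Finset (Fin n) // A.card = r}) (hu : u ∈ Γ) :
    ((W \ Γ).filter
        (fun w => Γ.filter (fun x => (johnson n r s).Adj x w) = {u})).card
      ≤ Nat.choose r s * (n - r) := by
  classical
  set G := johnson n r s with hG
  set U := (W \ Γ).filter (fun w => Γ.filter (fun x => G.Adj x w) = {u}) with hUdef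
  -- every element of U is adjacent to u
  have hadj : ∀ w ∈ U, G.Adj u w := by
    intro w hw
    have h2 := (Finset.mem_filter.mp hw).2
    have hu' : u ∈ Γ.filter (fun x => G.Adj x w) := by
      rw [h2]; exact Finset.mem_singleton_self u
    exact (Finset.mem_filter.mp hu').2
  have honly : ∀ w ∈ U, ∀ x ∈ Γ, G.Adj x w → x = u := by
    intro w hw x hx hxw
    have h2 := (Finset.mem_filter.mp hw).2
    have : x ∈ ({u} : Finset _) := by
      rw [← h2]; exact Finset.mem_filter.mpr ⟨hx, hxw⟩
    exact Finset.mem_singleton.mp this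
  have hnotΓ : ∀ w ∈ U, w ∉ Γ := fun w hw =>
    (Finset.mem_sdiff.mp (Finset.mem_filter.mp hw).1).2
  have hWmem : ∀ w ∈ U, w ∈ W := fun w hw =>
    (Finset.mem_sdiff.mp (Finset.mem_filter.mp hw).1).1
  -- any two distinct elements of U are adjacent
  have hpair : ∀ w ∈ U, ∀ w' ∈ U, w ≠ w' → G.Adj w w' := by
    intro w hw w' hw' hne
    by_contra hnadj
    set Γ' := insert w (insert w' (Γ.erase u)) with hΓ'
    have hsub : Γ' ⊆ W := by
      intro x hx
      rcases Finset.mem_insert.mp hx with rfl | hx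
      · exact hWmem _ hw
      rcases Finset.mem_insert.mp hx with rfl | hx
      · exact hWmem _ hw'
      · exact hΓW (Finset.mem_of_mem_erase hx)
    have key : ∀ y ∈ Γ.erase u, ∀ w'' ∈ U, ¬ G.Adj y w'' := by
      intro y hy w'' hw'' hadj'
      exact (Finset.ne_of_mem_erase hy) (honly w'' hw'' y (Finset.mem_of_mem_erase hy) hadj')
    have hmem : ∀ z ∈ Γ', z = w ∨ z = w' ∨ z ∈ Γ.erase u := by
      intro z hz
      rcases Finset.mem_insert.mp hz with h | h
      · exact Or.inl h
      rcases Finset.mem_insert.mp h with h | h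
      · exact Or.inr (Or.inl h)
      · exact Or.inr (Or.inr h)
    have hindep : IsIndep G Γ' := by
      intro x hx y hy hxy
      rcases hmem x hx with h1 | h1 | h1
      · subst h1
        rcases hmem y hy with h2 | h2 | h2
        · subst h2; exact G.loopless.irrefl _ hxy
        · subst h2; exact hnadj hxy
        · exact key y h2 x hw hxy.symm
      · subst h1
        rcases hmem y hy with h2 | h2 | h2
        · subst h2; exact hnadj hxy.symm
        · subst h2; exact G.loopless.irrefl _ hxy
        · exact key y h2 x hw' hxy.symm
      · rcases hmem y hy with h2 | h2 | h2
        · exact key x h1 y (by rw [h2]; exact hw) hxy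
        · exact key x h1 y (by rw [h2]; exact hw') hxy
        · exact hind x (Finset.mem_of_mem_erase h1) y (Finset.mem_of_mem_erase h2) hxy
    have hw'ne : w' ∉ Γ.erase u := fun h => hnotΓ w' hw' (Finset.mem_of_mem_erase h)
    have hwne : w ∉ insert w' (Γ.erase u) := by
      intro h
      rcases Finset.mem_insert.mp h with h | h
      · exact hne h
      · exact hnotΓ w hw (Finset.mem_of_mem_erase h)
    have hcard : Γ'.card = Γ.card + 1 := by
      rw [hΓ', Finset.card_insert_of_notMem hwne, Finset.card_insert_of_notMem hw'ne,
        Finset.card_erase_of_mem hu]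
      have : 1 ≤ Γ.card := Finset.card_pos.mpr ⟨u, hu⟩
      omega
    have := hmax Γ' hsub hindep
    omega
  -- nonemptiness of w \ u and basic card facts
  have hcards : ∀ w ∈ U, (w.1 ∩ u.1).card = s ∧ (w.1 \ u.1).Nonempty := by
    intro w hw
    have h1 : (u.1 ∩ w.1).card = s := (hadj w hw).2
    have h2 : (w.1 ∩ u.1).card = s := by rw [Finset.inter_comm]; exact h1
    refine ⟨h2, ?_⟩
    have h3 : (w.1 \ u.1).card + (w.1 ∩ u.1).card = w.1.card :=
      Finset.card_sdiff_add_card_inter _ _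
    rw [h2, w.2] at h3
    exact Finset.card_pos.mp (by omega)
  -- the injection
  set T := (u.1.powersetCard s) ×ˢ (u.1ᶜ) with hT
  have hmaps : ∀ w ∈ U, ∀ (h : (w.1 \ u.1).Nonempty),
      ((w.1 ∩ u.1), (w.1 \ u.1).min' h) ∈ T := by
    intro w hw h
    refine Finset.mem_product.mpr ⟨?_, ?_⟩
    · refine Finset.mem_powersetCard.mpr ⟨Finset.inter_subset_right, (hcards w hw).1⟩
    · have := (w.1 \ u.1).min'_mem h
      exact Finset.mem_compl.mpr (Finset.mem_sdiff.mp this).2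
  have hune : u.1.Nonempty := by
    apply Finset.card_pos.mp
    rw [u.2]; omega
  set u0 := u.1.min' hune with hu0
  have hle : U.card ≤ T.card := by
    apply Finset.card_le_card_of_injOn
      (fun w => if hw : w ∈ U then ((w.1 ∩ u.1), (w.1 \ u.1).min' (hcards w hw).2)
        else (∅, u0))
    · intro w hw
      simp only [Finset.mem_coe] at hw
      beta_reduce
      rw [dif_pos hw]
      exact hmaps w hw (hcards w hw).2
    · intro w hw w' hw' heq
      simp only [Finset.mem_coe] at hw hw'
      simp only [dif_pos hw, dif_pos hw'] at heq
      by_contra hne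
      have hA := hpair w hw w' hw' hne
      rw [Prod.mk.injEq] at heq
      obtain ⟨hSeq, hmeq⟩ := heq
      have hm1 : (w.1 \ u.1).min' (hcards w hw).2 ∈ w.1 \ u.1 := Finset.min'_mem _ _
      have hm2 : (w.1 \ u.1).min' (hcards w hw).2 ∈ w'.1 \ u.1 := by
        rw [hmeq]; exact Finset.min'_mem _ _
      -- w ∩ w' = w ∩ u
      have hsubS : w.1 ∩ u.1 ⊆ w.1 ∩ w'.1 := by
        intro x hx
        refine Finset.mem_inter.mpr ⟨(Finset.mem_inter.mp hx).1, ?_⟩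
        rw [hSeq] at hx
        exact (Finset.mem_inter.mp hx).1
      have hWW : (w.1 ∩ w'.1).card = s := hA.2
      have hInterEq : w.1 ∩ u.1 = w.1 ∩ w'.1 :=
        Finset.eq_of_subset_of_card_le hsubS (by rw [hWW, (hcards w hw).1])
      have : (w.1 \ u.1).min' (hcards w hw).2 ∈ w.1 ∩ u.1 := by
        have h5 : (w.1 \ u.1).min' (hcards w hw).2 ∈ w.1 ∩ w'.1 :=
          Finset.mem_inter.mpr ⟨(Finset.mem_sdiff.mp hm1).1, (Finset.mem_sdiff.mp hm2).1⟩
        rwa [← hInterEq] at h5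
      exact (Finset.mem_sdiff.mp hm1).2 (Finset.mem_inter.mp this).2
  have hTcard : T.card = Nat.choose r s * (n - r) := by
    rw [hT, Finset.card_product, Finset.card_powersetCard, Finset.card_compl, u.2,
      Fintype.card_fin]
  rw [← hUdef] at *
  omega
end

section
/- Fix r and s with r = 2s+1, and suppose α(G(n,r,s)) ≤ C₀ n^s for a constant C₀ depending only on r, s. Let Γ be a maximum independent set in the induced subgraph of G(n,r,s) on W, and let U₁ be the set of vertices w ∈ W \ Γ with exactly one neighbor in Γ. Then |U₁| ≤ C₂ n^{s+1} for a constant C₂ depending only on r and s. -/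
lemma clique_bound {n r s : ℕ} (hr : r = 2 * s + 1)
    (K : Finset {A : Finset (Fin n) // A.card = r})
    (hK : ∀ w ∈ K, ∀ w' ∈ K, w ≠ w' → ((w : Finset (Fin n)) ∩ (w' : Finset (Fin n))).card = s) :
    K.card ≤ 1 + Nat.choose r s * (n + 1) := by
  letI : Fintype (WithTop (Fin n)) := instFintypeOption
  rcases K.eq_empty_or_nonempty with h | ⟨A, hA⟩
  · simp [h]
  have key : (K.erase A).card ≤ Nat.choose r s * (n + 1) := by
    have hmaps : ∀ B ∈ K.erase A,
        ((B : Finset (Fin n)) ∩ (A : Finset (Fin n)), ((B : Finset (Fin n)) \ (A : Finset (Fin n))).min)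
          ∈ ((A : Finset (Fin n)).powersetCard s) ×ˢ (Finset.univ : Finset (WithTop (Fin n))) := by
      intro B hB
      have hBA : B ≠ A := Finset.ne_of_mem_erase hB
      have hs : ((B : Finset (Fin n)) ∩ (A : Finset (Fin n))).card = s :=
        hK B (Finset.mem_of_mem_erase hB) A hA hBA
      simp only [Finset.mem_product, Finset.mem_powersetCard, Finset.mem_univ, and_true]
      exact ⟨Finset.inter_subset_right, hs⟩
    have hinj : ∀ B ∈ K.erase A, ∀ B' ∈ K.erase A,
        ((B : Finset (Fin n)) ∩ (A : Finset (Fin n)), ((B : Finset (Fin n)) \ (A : Finset (Fin n))).min)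
          = ((B' : Finset (Fin n)) ∩ (A : Finset (Fin n)), ((B' : Finset (Fin n)) \ (A : Finset (Fin n))).min)
          → B = B' := by
      intro B hB B' hB' heq
      by_contra hne
      have hBA : B ≠ A := Finset.ne_of_mem_erase hB
      have hB'A : B' ≠ A := Finset.ne_of_mem_erase hB'
      have hBK := Finset.mem_of_mem_erase hB
      have hB'K := Finset.mem_of_mem_erase hB'
      have hsB : ((B : Finset (Fin n)) ∩ (A : Finset (Fin n))).card = s := hK B hBK A hA hBA
      have hsBB' : ((B : Finset (Fin n)) ∩ (B' : Finset (Fin n))).card = s := hK B hBK B' hB'K hne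
      -- B \ A is nonempty
      have hcardB : ((B : Finset (Fin n)) \ (A : Finset (Fin n))).card = r - s := by
        have := Finset.card_sdiff_add_card_inter (B : Finset (Fin n)) (A : Finset (Fin n))
        rw [hsB, B.2] at this
        omega
      have hne' : ((B : Finset (Fin n)) \ (A : Finset (Fin n))).Nonempty := by
        rw [← Finset.card_pos, hcardB]; omega
      obtain ⟨e, he⟩ := hne'
      have hmin : ((B : Finset (Fin n)) \ (A : Finset (Fin n))).min ≠ ⊤ := by
        rw [ne_eq, Finset.min_eq_top]
        exact Finset.ne_empty_of_mem he
      obtain ⟨m, hm⟩ := Option.ne_none_iff_exists'.mp hmin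
      have hmB : m ∈ (B : Finset (Fin n)) \ (A : Finset (Fin n)) := Finset.mem_of_min hm
      have hmB' : m ∈ (B' : Finset (Fin n)) \ (A : Finset (Fin n)) := by
        apply Finset.mem_of_min
        have h2 := congrArg Prod.snd heq
        simp only at h2
        rw [← h2]
        exact hm
      have hT : (B : Finset (Fin n)) ∩ (A : Finset (Fin n)) = (B' : Finset (Fin n)) ∩ (A : Finset (Fin n)) :=
        congrArg Prod.fst heq
      have hmnotT : m ∉ (B : Finset (Fin n)) ∩ (A : Finset (Fin n)) := by
        intro hc
        exact (Finset.mem_sdiff.mp hmB).2 (Finset.mem_inter.mp hc).2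
      have hsub : insert m ((B : Finset (Fin n)) ∩ (A : Finset (Fin n))) ⊆ (B : Finset (Fin n)) ∩ (B' : Finset (Fin n)) := by
        intro y hy
        rcases Finset.mem_insert.mp hy with rfl | hy
        · exact Finset.mem_inter.mpr ⟨(Finset.mem_sdiff.mp hmB).1, (Finset.mem_sdiff.mp hmB').1⟩
        · refine Finset.mem_inter.mpr ⟨(Finset.mem_inter.mp hy).1, ?_⟩
          rw [hT] at hy
          exact (Finset.mem_inter.mp hy).1
      have := Finset.card_le_card hsub
      rw [Finset.card_insert_of_notMem hmnotT, hsB, hsBB'] at this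
      omega
    have := Finset.card_le_card_of_injOn _ hmaps hinj
    calc (K.erase A).card ≤ _ := this
      _ ≤ Nat.choose r s * (n + 1) := by
          rw [Finset.card_product, Finset.card_powersetCard, A.2]
          have h1 : Fintype.card (WithTop (Fin n)) = n + 1 := by
            show Fintype.card (Option (Fin n)) = n + 1
            simp
          rw [Finset.card_univ, h1]
  have := Finset.card_erase_of_mem hA
  have := Finset.card_pos.mpr ⟨A, hA⟩
  omega


theorem stmt5 (r s C₀ : ℕ) (hr : r = 2 * s + 1)
    (hα : ∀ n : ℕ, ∀ Γ : Finset {A : Finset (Fin n) // A.card = r},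
      IsIndep (johnson n r s) Γ → Γ.card ≤ C₀ * n ^ s) :
    ∃ C₂ : ℕ, ∀ n : ℕ, ∀ W Γ : Finset {A : Finset (Fin n) // A.card = r},
      Γ ⊆ W → IsIndep (johnson n r s) Γ →
      (∀ Γ' ⊆ W, IsIndep (johnson n r s) Γ' → Γ'.card ≤ Γ.card) →
      ((W \ Γ).filter
          (fun w => (Γ.filter (fun x => (johnson n r s).Adj x w)).card = 1)).card
        ≤ C₂ * n ^ (s + 1) := by
  refine ⟨C₀ * (1 + 3 * Nat.choose r s), ?_⟩
  intro n W Γ hΓW hind hmax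
  set G := johnson n r s with hG
  set U1 := (W \ Γ).filter
      (fun w => (Γ.filter (fun x => G.Adj x w)).card = 1) with hU1
  rcases Nat.eq_zero_or_pos n with rfl | hn
  · -- no vertices when n = 0
    have hempty : U1 = ∅ := by
      apply Finset.eq_empty_of_forall_notMem
      rintro ⟨A, hA⟩ _
      have : A.card ≤ 0 := by
        calc A.card ≤ (Finset.univ : Finset (Fin 0)).card := Finset.card_le_univ A
          _ = 0 := by simp
      omega
    simp [hempty]
  -- unique neighbor in Γ
  have huniq : ∀ w ∈ U1, ∀ x ∈ Γ, ∀ y ∈ Γ, G.Adj x w → G.Adj y w → x = y := by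
    intro w hw x hx y hy hxw hyw
    have h1 : (Γ.filter (fun x => G.Adj x w)).card = 1 := (Finset.mem_filter.mp hw).2
    exact Finset.card_le_one.mp (le_of_eq h1) x
      (Finset.mem_filter.mpr ⟨hx, hxw⟩) y (Finset.mem_filter.mpr ⟨hy, hyw⟩)
  have hnonΓ : ∀ w ∈ U1, w ∉ Γ ∧ w ∈ W := by
    intro w hw
    have := (Finset.mem_sdiff.mp (Finset.mem_filter.mp hw).1)
    exact ⟨this.2, this.1⟩
  -- fiber clique property
  have hfiber : ∀ x ∈ Γ, ∀ w ∈ U1.filter (fun w => G.Adj x w),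
      ∀ w' ∈ U1.filter (fun w => G.Adj x w), w ≠ w' → G.Adj w w' := by
    intro x hx w hw w' hw' hne
    obtain ⟨hwU, hxw⟩ := Finset.mem_filter.mp hw
    obtain ⟨hw'U, hxw'⟩ := Finset.mem_filter.mp hw'
    by_contra hadj
    set Γ' := insert w (insert w' (Γ.erase x)) with hΓ'
    have hwΓ := (hnonΓ w hwU).1
    have hw'Γ := (hnonΓ w' hw'U).1
    have hsub : Γ' ⊆ W := by
      intro a ha
      rcases Finset.mem_insert.mp ha with rfl | ha
      · exact (hnonΓ a hwU).2
      rcases Finset.mem_insert.mp ha with rfl | ha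
      · exact (hnonΓ a hw'U).2
      · exact hΓW (Finset.mem_of_mem_erase ha)
    -- only neighbor of w (resp w') in Γ is x
    have honly : ∀ u, u ∈ U1 → G.Adj x u → ∀ b ∈ Γ.erase x, ¬ G.Adj u b := by
      intro u hu hxu b hb hub
      have hbΓ := Finset.mem_of_mem_erase hb
      have : b = x := huniq u hu b hbΓ x hx (G.symm.symm _ _ hub) hxu
      exact Finset.ne_of_mem_erase hb this
    have hindep' : IsIndep G Γ' := by
      intro a ha b hb hab
      have hcases : ∀ c, c ∈ Γ' → c = w ∨ c = w' ∨ c ∈ Γ.erase x := by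
        intro c hc
        rcases Finset.mem_insert.mp hc with rfl | hc
        · exact Or.inl rfl
        rcases Finset.mem_insert.mp hc with rfl | hc
        · exact Or.inr (Or.inl rfl)
        · exact Or.inr (Or.inr hc)
      rcases hcases a ha with rfl | rfl | haΓ <;> rcases hcases b hb with rfl | rfl | hbΓ
      · exact G.loopless.irrefl _ hab
      · exact hadj hab
      · exact honly _ hwU hxw _ hbΓ hab
      · exact hadj (G.symm.symm _ _ hab)
      · exact G.loopless.irrefl _ hab
      · exact honly _ hw'U hxw' _ hbΓ hab
      · exact honly _ hwU hxw _ haΓ (G.symm.symm _ _ hab)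
      · exact honly _ hw'U hxw' _ haΓ (G.symm.symm _ _ hab)
      · exact hind a (Finset.mem_of_mem_erase haΓ) b (Finset.mem_of_mem_erase hbΓ) hab
    have hcard : Γ'.card = Γ.card + 1 := by
      have h1 : w' ∉ Γ.erase x := fun h => hw'Γ (Finset.mem_of_mem_erase h)
      have h2 : w ∉ insert w' (Γ.erase x) := by
        intro h
        rcases Finset.mem_insert.mp h with rfl | h
        · exact hne rfl
        · exact hwΓ (Finset.mem_of_mem_erase h)
      have h3 := Finset.card_erase_of_mem hx
      have h4 := Finset.card_pos.mpr ⟨x, hx⟩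
      rw [hΓ', Finset.card_insert_of_notMem h2, Finset.card_insert_of_notMem h1, h3]
      omega
    have := hmax Γ' hsub hindep'
    omega
  -- U1 covered by fibers
  have hcover : U1 ⊆ Γ.biUnion (fun x => U1.filter (fun w => G.Adj x w)) := by
    intro w hw
    have h1 : (Γ.filter (fun x => G.Adj x w)).card = 1 := (Finset.mem_filter.mp hw).2
    obtain ⟨x, hx⟩ := Finset.card_eq_one.mp h1
    have hxmem : x ∈ Γ.filter (fun x => G.Adj x w) := by rw [hx]; exact Finset.mem_singleton_self x
    obtain ⟨hxΓ, hxw⟩ := Finset.mem_filter.mp hxmem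
    exact Finset.mem_biUnion.mpr ⟨x, hxΓ, Finset.mem_filter.mpr ⟨hw, hxw⟩⟩
  have hfibbound : ∀ x ∈ Γ, (U1.filter (fun w => G.Adj x w)).card ≤ 1 + Nat.choose r s * (n + 1) := by
    intro x hx
    apply clique_bound hr
    intro w hw w' hw' hne
    exact (hfiber x hx w hw w' hw' hne).2
  calc U1.card ≤ (Γ.biUnion (fun x => U1.filter (fun w => G.Adj x w))).card :=
        Finset.card_le_card hcover
    _ ≤ ∑ x ∈ Γ, (U1.filter (fun w => G.Adj x w)).card := Finset.card_biUnion_le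
    _ ≤ ∑ x ∈ Γ, (1 + Nat.choose r s * (n + 1)) := Finset.sum_le_sum hfibbound
    _ = Γ.card * (1 + Nat.choose r s * (n + 1)) := by rw [Finset.sum_const, smul_eq_mul]
    _ ≤ (C₀ * n ^ s) * (1 + Nat.choose r s * (n + 1)) :=
        Nat.mul_le_mul_right _ (hα n Γ hind)
    _ ≤ (C₀ * n ^ s) * ((1 + 3 * Nat.choose r s) * n) := by
        apply Nat.mul_le_mul_left
        have : n + 1 ≤ 2 * n := by omega
        calc 1 + Nat.choose r s * (n + 1) ≤ n + Nat.choose r s * (2 * n) := by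
              have := Nat.mul_le_mul_left (Nat.choose r s) this
              omega
          _ ≤ (1 + 3 * Nat.choose r s) * n := by ring_nf; nlinarith [Nat.choose r s]
    _ = C₀ * (1 + 3 * Nat.choose r s) * n ^ (s + 1) := by ring
end

section
/- Let G be a finite graph, α its independence number, and suppose there is a constant M such that for every induced subgraph H of G and every maximum independent set Γ of H, the number of vertices of H outside Γ with at most two neighbors in Γ is at most M. Then for any W ⊆ V(G) with |W| = l, the number of edges induced on W is at least Σ_{i=1}^{⌊l/α⌋} (3(l − iα) − 2M). -/
open Finset

lemma crossCount {V : Type*} [DecidableEq V] (G : SimpleGraph V) [DecidableRel G.Adj]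
    (Γ W' : Finset V) :
    ((W' ×ˢ Γ).filter fun p => G.Adj p.1 p.2).card
      = ∑ w ∈ W', (Γ.filter fun x => G.Adj x w).card := by
  rw [Finset.card_filter, Finset.sum_product]
  refine Finset.sum_congr rfl fun w _ => ?_
  rw [Finset.card_filter]
  refine Finset.sum_congr rfl fun y _ => ?_
  exact if_congr (G.adj_comm w y) rfl rfl

lemma edge_split {V : Type*} [DecidableEq V] (G : SimpleGraph V) [DecidableRel G.Adj]
    (W Γ : Finset V) (hΓ : Γ ⊆ W) :
    edgeCount G (W \ Γ) + (((W \ Γ) ×ˢ Γ).filter fun p => G.Adj p.1 p.2).card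
      ≤ edgeCount G W := by
  set W' := W \ Γ with hW'
  set A := (W' ×ˢ W').filter fun p => G.Adj p.1 p.2 with hA
  set B := (W' ×ˢ Γ).filter fun p => G.Adj p.1 p.2 with hB
  set C := (Γ ×ˢ W').filter fun p => G.Adj p.1 p.2 with hC
  have hCB : C = B.image Prod.swap := by
    ext ⟨a, b⟩
    simp only [hB, hC, Finset.mem_image, Finset.mem_filter, Finset.mem_product, Prod.exists,
      Prod.swap_prod_mk, Prod.mk.injEq]
    constructor
    · rintro ⟨⟨ha, hb⟩, hadj⟩
      exact ⟨b, a, ⟨⟨hb, ha⟩, G.adj_symm hadj⟩, rfl, rfl⟩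
    · rintro ⟨x, y, ⟨⟨hx, hy⟩, hadj⟩, rfl, rfl⟩
      exact ⟨⟨hy, hx⟩, G.adj_symm hadj⟩
  have hCcard : C.card = B.card := by
    rw [hCB, Finset.card_image_of_injective _ Prod.swap_injective]
  have hW'Γ : ∀ x, x ∈ W' → x ∈ Γ → False := by
    intro x hx hxΓ
    exact (Finset.mem_sdiff.mp hx).2 hxΓ
  have hdAB : Disjoint A B := by
    rw [Finset.disjoint_left]
    rintro ⟨a, b⟩ hab hab'
    simp only [hA, hB, Finset.mem_filter, Finset.mem_product] at hab hab'
    exact hW'Γ b hab.1.2 hab'.1.2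
  have hdAC : Disjoint A C := by
    rw [Finset.disjoint_left]
    rintro ⟨a, b⟩ hab hab'
    simp only [hA, hC, Finset.mem_filter, Finset.mem_product] at hab hab'
    exact hW'Γ a hab.1.1 hab'.1.1
  have hdBC : Disjoint B C := by
    rw [Finset.disjoint_left]
    rintro ⟨a, b⟩ hab hab'
    simp only [hB, hC, Finset.mem_filter, Finset.mem_product] at hab hab'
    exact hW'Γ a hab.1.1 hab'.1.1
  have hsub : A ∪ B ∪ C ⊆ (W ×ˢ W).filter fun p => G.Adj p.1 p.2 := by
    intro p hp
    have hW'W : W' ⊆ W := Finset.sdiff_subset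
    simp only [hA, hB, hC, Finset.mem_union, Finset.mem_filter, Finset.mem_product] at hp ⊢
    rcases hp with (⟨⟨h1, h2⟩, h3⟩ | ⟨⟨h1, h2⟩, h3⟩) | ⟨⟨h1, h2⟩, h3⟩
    · exact ⟨⟨hW'W h1, hW'W h2⟩, h3⟩
    · exact ⟨⟨hW'W h1, hΓ h2⟩, h3⟩
    · exact ⟨⟨hΓ h1, hW'W h2⟩, h3⟩
  have hcard : A.card + B.card + C.card ≤ ((W ×ˢ W).filter fun p => G.Adj p.1 p.2).card := by
    calc A.card + B.card + C.card = (A ∪ B ∪ C).card := by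
          rw [Finset.card_union_of_disjoint (Finset.disjoint_union_left.mpr ⟨hdAC, hdBC⟩),
            Finset.card_union_of_disjoint hdAB]
      _ ≤ _ := Finset.card_le_card hsub
  have h2 : A.card + B.card * 2 ≤ ((W ×ˢ W).filter fun p => G.Adj p.1 p.2).card := by
    omega
  calc edgeCount G W' + B.card = (A.card + B.card * 2) / 2 := by
        rw [Nat.add_mul_div_right _ _ (by norm_num : 0 < 2)]; rfl
    _ ≤ _ := Nat.div_le_div_right h2

lemma key {V : Type*} [Fintype V] [DecidableEq V] (G : SimpleGraph V)
    [DecidableRel G.Adj] (α M : ℕ)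
    (hα_max : ∀ Γ : Finset V, IsIndep G Γ → Γ.card ≤ α)
    (hM : ∀ W' : Finset V, ∀ Γ ⊆ W', IsIndep G Γ →
      (∀ Γ' ⊆ W', IsIndep G Γ' → Γ'.card ≤ Γ.card) →
      ((W' \ Γ).filter (fun w => (Γ.filter (fun x => G.Adj x w)).card ≤ 2)).card ≤ M) :
    ∀ q : ℕ, ∀ W : Finset V, ∀ L : ℤ, (q : ℤ) * α ≤ L → L ≤ W.card →
      (∑ i ∈ Finset.range q, (3 * (L - ((i : ℤ) + 1) * α) - 2 * M))
        ≤ (edgeCount G W : ℤ) := by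
  intro q
  induction q with
  | zero => intro W L _ _; simp [Int.natCast_nonneg]
  | succ q ih =>
    intro W L h1 h2
    classical
    set S := W.powerset.filter (fun Γ => IsIndep G Γ) with hS
    have hSne : S.Nonempty := ⟨∅, by
      simp only [hS, Finset.mem_filter, Finset.mem_powerset]
      exact ⟨Finset.empty_subset _, fun x hx => absurd hx (Finset.notMem_empty x)⟩⟩
    obtain ⟨Γ, hΓS, hmax⟩ := S.exists_max_image Finset.card hSne
    have hΓW : Γ ⊆ W := Finset.mem_powerset.mp (Finset.mem_filter.mp hΓS).1
    have hΓind : IsIndep G Γ := (Finset.mem_filter.mp hΓS).2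
    have hmax' : ∀ Γ' ⊆ W, IsIndep G Γ' → Γ'.card ≤ Γ.card := fun Γ' h hi =>
      hmax Γ' (Finset.mem_filter.mpr ⟨Finset.mem_powerset.mpr h, hi⟩)
    have hc : Γ.card ≤ α := hα_max Γ hΓind
    set W' := W \ Γ with hW'def
    have hmcard : W'.card = W.card - Γ.card := Finset.card_sdiff_of_subset hΓW
    have hmZ : (W'.card : ℤ) = (W.card : ℤ) - Γ.card := by
      rw [hmcard, Nat.cast_sub (Finset.card_le_card hΓW)]
    have hdeg1 : ∀ w ∈ W', 1 ≤ (Γ.filter fun x => G.Adj x w).card := by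
      intro w hw
      by_contra hcon
      have h0 : (Γ.filter fun x => G.Adj x w).card = 0 := by omega
      have hnone : ∀ x ∈ Γ, ¬ G.Adj x w := by
        intro x hx hadj
        have : x ∈ Γ.filter fun x => G.Adj x w := Finset.mem_filter.mpr ⟨hx, hadj⟩
        rw [Finset.card_eq_zero.mp h0] at this
        exact Finset.notMem_empty x this
      have hwW : w ∈ W := (Finset.mem_sdiff.mp hw).1
      have hwΓ : w ∉ Γ := (Finset.mem_sdiff.mp hw).2
      have hind' : IsIndep G (insert w Γ) := by
        intro x hx y hy hadj
        rcases Finset.mem_insert.mp hx with hx' | hx' <;>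
          rcases Finset.mem_insert.mp hy with hy' | hy'
        · exact absurd (hx'.trans hy'.symm) (G.ne_of_adj hadj)
        · subst hx'; exact hnone y hy' (G.adj_symm hadj)
        · subst hy'; exact hnone x hx' hadj
        · exact hΓind x hx' y hy' hadj
      have := hmax' (insert w Γ) (Finset.insert_subset hwW hΓW) hind'
      rw [Finset.card_insert_of_notMem hwΓ] at this
      omega
    set Exc := W'.filter (fun w => (Γ.filter (fun x => G.Adj x w)).card ≤ 2) with hExc
    have heM : Exc.card ≤ M := hM W Γ hΓW hΓind hmax'
    have hExcW' : Exc ⊆ W' := Finset.filter_subset _ _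
    have hem : Exc.card ≤ W'.card := Finset.card_le_card hExcW'
    -- sum of degrees lower bound
    have hsum : 3 * (W'.card - Exc.card) + Exc.card
        ≤ ∑ w ∈ W', (Γ.filter fun x => G.Adj x w).card := by
      rw [← Finset.sum_sdiff hExcW']
      have hA : 3 * (W'.card - Exc.card) ≤ ∑ w ∈ W' \ Exc, (Γ.filter fun x => G.Adj x w).card := by
        rw [← Finset.card_sdiff_of_subset hExcW']
        calc 3 * (W' \ Exc).card = ∑ _w ∈ W' \ Exc, 3 := by
              rw [Finset.sum_const, smul_eq_mul, mul_comm]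
          _ ≤ _ := by
              apply Finset.sum_le_sum
              intro w hw
              have hw1 := Finset.mem_sdiff.mp hw
              have : ¬ (Γ.filter fun x => G.Adj x w).card ≤ 2 := by
                intro hle
                exact hw1.2 (Finset.mem_filter.mpr ⟨hw1.1, hle⟩)
              omega
      have hB : Exc.card ≤ ∑ w ∈ Exc, (Γ.filter fun x => G.Adj x w).card := by
        calc Exc.card = ∑ _w ∈ Exc, 1 := by simp
          _ ≤ _ := Finset.sum_le_sum fun w hw => hdeg1 w (hExcW' hw)
      omega
    have hcross : ((W' ×ˢ Γ).filter fun p => G.Adj p.1 p.2).card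
        = ∑ w ∈ W', (Γ.filter fun x => G.Adj x w).card := crossCount G Γ W'
    have hsplit : edgeCount G W' + ((W' ×ˢ Γ).filter fun p => G.Adj p.1 p.2).card
        ≤ edgeCount G W := edge_split G W Γ hΓW
    -- apply IH
    have hIH : (∑ i ∈ Finset.range q, (3 * ((L - α) - ((i : ℤ) + 1) * α) - 2 * M))
        ≤ (edgeCount G W' : ℤ) := by
      apply ih W' (L - α)
      · push_cast at h1 ⊢
        linarith
      · rw [hmZ]
        have : (Γ.card : ℤ) ≤ α := by exact_mod_cast hc
        linarith
    -- cross edges lower bound in ℤ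
    have hcrossZ : 3 * (L - α) - 2 * M ≤ (((W' ×ˢ Γ).filter fun p => G.Adj p.1 p.2).card : ℤ) := by
      have h1' : (3 * (W'.card - Exc.card) + Exc.card : ℕ)
          ≤ ((W' ×ˢ Γ).filter fun p => G.Adj p.1 p.2).card := hcross ▸ hsum
      have h2' : ((3 * (W'.card - Exc.card) + Exc.card : ℕ) : ℤ)
          = 3 * ((W'.card : ℤ) - Exc.card) + Exc.card := by
        rw [Nat.cast_add, Nat.cast_mul, Nat.cast_sub hem]
        norm_num
      have h3' : ((3 * (W'.card - Exc.card) + Exc.card : ℕ) : ℤ)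
          ≤ (((W' ×ˢ Γ).filter fun p => G.Adj p.1 p.2).card : ℤ) := by exact_mod_cast h1'
      have hcZ : (Γ.card : ℤ) ≤ α := by exact_mod_cast hc
      have heMZ : (Exc.card : ℤ) ≤ M := by exact_mod_cast heM
      have hemZ : (Exc.card : ℤ) ≤ W'.card := by exact_mod_cast hem
      rw [h2'] at h3'
      have hWcard : L ≤ (W.card : ℤ) := h2
      linarith [hmZ]
    rw [Finset.sum_range_succ']
    have hre : (∑ i ∈ Finset.range q, (3 * (L - (((i + 1) : ℕ) + 1 : ℤ) * α) - 2 * M))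
        = ∑ i ∈ Finset.range q, (3 * ((L - α) - ((i : ℤ) + 1) * α) - 2 * M) := by
      apply Finset.sum_congr rfl
      intro i _
      push_cast
      ring
    rw [hre]
    have hcast : ((edgeCount G W' + ((W' ×ˢ Γ).filter fun p => G.Adj p.1 p.2).card : ℕ) : ℤ)
        ≤ (edgeCount G W : ℤ) := by exact_mod_cast hsplit
    push_cast at hcast
    push_cast
    linarith

theorem stmt9 {V : Type*} [Fintype V] [DecidableEq V] (G : SimpleGraph V)
    [DecidableRel G.Adj] (α M : ℕ)
    (hα_ex : ∃ Γ : Finset V, IsIndep G Γ ∧ Γ.card = α)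
    (hα_max : ∀ Γ : Finset V, IsIndep G Γ → Γ.card ≤ α)
    (hM : ∀ W' : Finset V, ∀ Γ ⊆ W', IsIndep G Γ →
      (∀ Γ' ⊆ W', IsIndep G Γ' → Γ'.card ≤ Γ.card) →
      ((W' \ Γ).filter (fun w => (Γ.filter (fun x => G.Adj x w)).card ≤ 2)).card ≤ M)
    (W : Finset V) (l : ℕ) (hW : W.card = l) :
    (∑ i ∈ Finset.Icc 1 (l / α), (3 * ((l : ℤ) - (i : ℤ) * α) - 2 * M))
      ≤ (edgeCount G W : ℤ) := by
  have h := key G α M hα_max hM (l / α) W (l : ℤ)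
    (by exact_mod_cast Nat.div_mul_le_self l α) (by rw [hW])
  rw [← Finset.Ico_add_one_right_eq_Icc, Finset.sum_Ico_eq_sum_range]
  simp only [Nat.add_sub_cancel, Nat.succ_sub_one]
  calc (∑ i ∈ Finset.range (l / α), (3 * ((l : ℤ) - ((1 + i : ℕ) : ℤ) * α) - 2 * M))
      = ∑ i ∈ Finset.range (l / α), (3 * ((l : ℤ) - ((i : ℤ) + 1) * α) - 2 * M) := by
        apply Finset.sum_congr rfl
        intro i _
        push_cast
        ring
    _ ≤ _ := h
end

section
/- Let r = 2s+1 and suppose α(G(n,r,s)) = (1+o(1)) · n^s · (2r−2s−1)!/(r!·(r−s−1)!). Let l : ℕ → ℕ satisfy l(n) = o(n^{2s+1}) and n^{2s} = o(l(n)). Then for every ε > 0, for all sufficiently large n, every set W of l(n) vertices of G(n,r,s) induces at least (1−ε) · (3/2) · l(n)² / α(G(n,r,s)) edges. -/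
instance {V : Type*} (G : SimpleGraph V) [DecidableRel G.Adj] (Γ : Finset V) :
    Decidable (IsIndep G Γ) := by unfold IsIndep; infer_instance

def pairCount {V : Type*} [DecidableEq V] (G : SimpleGraph V) [DecidableRel G.Adj]
    (W : Finset V) : ℕ :=
  ((W ×ˢ W).filter fun p => G.Adj p.1 p.2).card

lemma edgeCount_eq {V : Type*} [DecidableEq V] (G : SimpleGraph V) [DecidableRel G.Adj]
    (W : Finset V) : edgeCount G W = pairCount G W / 2 := rfl

lemma nat_lt_div_succ_mul (n a : ℕ) (h : 0 < a) : n < (n / a + 1) * a := by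
  have h1 := Nat.div_add_mod n a
  have h2 := Nat.mod_lt n h
  calc n = a * (n / a) + n % a := h1.symm
    _ < a * (n / a) + a := Nat.add_lt_add_left h2 _
    _ = (n / a + 1) * a := by ring

/-- nat helper function for the inductive edge count -/
def fa (a B k : ℕ) : ℕ := (k - B) / a - 1

lemma fa_mono (a B : ℕ) : Monotone (fa a B) := fun _ _ h =>
  Nat.sub_le_sub_right (Nat.div_le_div_right (Nat.sub_le_sub_right h B)) 1

lemma sum_tail (a B m t : ℕ) (hta : t ≤ a) (htm : t ≤ m) :
    ∑ k ∈ Finset.Ioc (m - t) m, fa a B k ≤ m - t - B := by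
  have h1 : ∑ k ∈ Finset.Ioc (m - t) m, fa a B k ≤ t * fa a B m := by
    calc ∑ k ∈ Finset.Ioc (m - t) m, fa a B k
        ≤ ∑ _k ∈ Finset.Ioc (m - t) m, fa a B m :=
          Finset.sum_le_sum fun k hk => fa_mono a B (Finset.mem_Ioc.mp hk).2
      _ = (Finset.Ioc (m - t) m).card * fa a B m := by rw [Finset.sum_const, smul_eq_mul]
      _ = t * fa a B m := by rw [Nat.card_Ioc, Nat.sub_sub_self htm]
  rcases Nat.eq_zero_or_pos (fa a B m) with h | h
  · rw [h, Nat.mul_zero] at h1; omega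
  · set q := (m - B) / a with hq
    have hfa : fa a B m = q - 1 := rfl
    have hq2 : 2 ≤ q := by unfold fa at h; omega
    have h3 : q * a ≤ m - B := Nat.div_mul_le_self _ _
    have h2 : t * (q - 1) ≤ a * (q - 1) := Nat.mul_le_mul_right _ hta
    have h4 : a * (q - 1) + a * 1 = a * q := by rw [← Nat.mul_add]; congr 1; omega
    have h5 : a * q = q * a := Nat.mul_comm _ _
    rw [hfa] at h1
    omega

lemma fa_real (a B k : ℕ) (ha : 1 ≤ a) :
    ((k : ℝ) - ((B + 2 * a : ℕ) : ℝ)) / (a : ℝ) ≤ ((fa a B k : ℕ) : ℝ) := by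
  have hapos : (0 : ℝ) < a := by exact_mod_cast ha
  set q := (k - B) / a with hq
  have h1 : k - B < (q + 1) * a := by
    rw [hq]; exact nat_lt_div_succ_mul _ _ (by omega)
  have h2 : (k : ℝ) - B ≤ ((k - B : ℕ) : ℝ) := by
    rcases le_or_gt B k with h | h
    · rw [Nat.cast_sub h]
    · have hz : k - B = 0 := by omega
      have : (k : ℝ) < B := by exact_mod_cast h
      rw [hz]; push_cast; linarith
  have h3 : ((k - B : ℕ) : ℝ) < ((q : ℝ) + 1) * a := by exact_mod_cast h1
  have h4 : (q : ℝ) - 1 ≤ ((q - 1 : ℕ) : ℝ) := by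
    rcases le_or_gt 1 q with h | h
    · rw [Nat.cast_sub h]; push_cast; linarith
    · have hz : q - 1 = 0 := by omega
      have : (q : ℝ) < 1 := by exact_mod_cast h
      rw [hz]; push_cast; linarith
  have hfa : fa a B k = q - 1 := rfl
  rw [hfa, div_le_iff₀ hapos]
  push_cast
  nlinarith [mul_le_mul_of_nonneg_left h4 hapos.le]

lemma gauss (M : ℕ) : M * M ≤ 2 * ∑ j ∈ Finset.Ioc 0 M, j := by
  induction M with
  | zero => simp
  | succ M ih =>
    rw [Finset.sum_Ioc_succ_top (Nat.zero_le _)]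
    nlinarith [ih]

lemma sum_shift (D M : ℕ) (g : ℕ → ℝ) :
    ∑ k ∈ Finset.Ioc D (M + D), g k = ∑ j ∈ Finset.Ioc 0 M, g (j + D) := by
  rw [show Finset.Ioc D (M + D) = Finset.Ioc (0 + D) (M + D) by rw [Nat.zero_add],
    ← Finset.map_add_right_Ioc, Finset.sum_map]
  rfl

lemma cross_bound {V : Type*} [DecidableEq V] (G : SimpleGraph V) [DecidableRel G.Adj]
    (W Γ : Finset V) (hΓW : Γ ⊆ W) :
    pairCount G (W \ Γ)
      + 6 * ((W \ Γ).filter fun w => ¬ (Γ.filter fun x => G.Adj x w).card ≤ 2).card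
      ≤ pairCount G W := by
  classical
  set W' := W \ Γ with hW'
  set good := W'.filter (fun w => ¬ (Γ.filter fun x => G.Adj x w).card ≤ 2) with hgood
  set T0 := (W' ×ˢ W').filter (fun p => G.Adj p.1 p.2) with hT0
  set T1 := (Γ ×ˢ W').filter (fun p => G.Adj p.1 p.2) with hT1
  set T2 := (W' ×ˢ Γ).filter (fun p => G.Adj p.1 p.2) with hT2
  have hsub : T0 ∪ T1 ∪ T2 ⊆ (W ×ˢ W).filter (fun p => G.Adj p.1 p.2) := by
    intro p hp
    simp only [hT0, hT1, hT2, hW', Finset.mem_union, Finset.mem_filter, Finset.mem_product,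
      Finset.mem_sdiff] at hp ⊢
    rcases hp with (⟨⟨⟨ha1, _⟩, hb1, _⟩, hadj⟩ | ⟨⟨ha1, hb1, _⟩, hadj⟩) | ⟨⟨⟨ha1, _⟩, hb1⟩, hadj⟩
    exacts [⟨⟨ha1, hb1⟩, hadj⟩, ⟨⟨hΓW ha1, hb1⟩, hadj⟩, ⟨⟨ha1, hΓW hb1⟩, hadj⟩]
  have hd01 : Disjoint T0 T1 := by
    rw [Finset.disjoint_left]
    intro p hp hp'
    simp only [hT0, hT1, hW', Finset.mem_filter, Finset.mem_product, Finset.mem_sdiff] at hp hp'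
    exact hp.1.1.2 hp'.1.1
  have hd02 : Disjoint (T0 ∪ T1) T2 := by
    rw [Finset.disjoint_left]
    intro p hp hp'
    simp only [hT0, hT1, hT2, hW', Finset.mem_union, Finset.mem_filter, Finset.mem_product,
      Finset.mem_sdiff] at hp hp'
    rcases hp with ⟨⟨_, _, hb⟩, _⟩ | ⟨⟨_, _, hb⟩, _⟩ <;> exact hb hp'.1.2
  have hcard : T0.card + T1.card + T2.card ≤ pairCount G W := by
    calc T0.card + T1.card + T2.card = (T0 ∪ T1).card + T2.card := by
          rw [Finset.card_union_of_disjoint hd01]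
      _ = (T0 ∪ T1 ∪ T2).card := by rw [Finset.card_union_of_disjoint hd02]
      _ ≤ _ := Finset.card_le_card hsub
  have key : ∀ (e : V → V → V × V), (∀ w, Function.Injective (fun x => e x w)) →
      (∀ x w, G.Adj x w → (e x w).1 ∈ Γ → True) → True := fun _ _ _ => trivial
  have h1 : 3 * good.card ≤ T1.card := by
    have hbi : good.biUnion (fun w => (Γ.filter fun x => G.Adj x w).image fun x => (x, w)) ⊆ T1 := by
      intro p hp
      simp only [Finset.mem_biUnion, Finset.mem_image, Finset.mem_filter] at hp
      obtain ⟨w, hw, x, hx, rfl⟩ := hp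
      simp only [hT1, Finset.mem_filter, Finset.mem_product]
      exact ⟨⟨hx.1, ((Finset.mem_filter.mp hw).1)⟩, hx.2⟩
    have hle := Finset.card_le_card hbi
    rw [Finset.card_biUnion] at hle
    · refine le_trans ?_ hle
      calc 3 * good.card = ∑ _w ∈ good, 3 := by rw [Finset.sum_const, smul_eq_mul, mul_comm]
        _ ≤ _ := by
            apply Finset.sum_le_sum
            intro w hw
            rw [Finset.card_image_of_injective _ (fun x y h => (Prod.ext_iff.mp h).1)]
            have := (Finset.mem_filter.mp hw).2
            omega
    · intro x hx y hy hxy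
      rw [Function.onFun, Finset.disjoint_left]
      intro p hp hq
      simp only [Finset.mem_image, Finset.mem_filter] at hp hq
      obtain ⟨x1, _, rfl⟩ := hp
      obtain ⟨y1, _, h⟩ := hq
      exact hxy (congrArg Prod.snd h).symm
  have h2 : 3 * good.card ≤ T2.card := by
    have hbi : good.biUnion (fun w => (Γ.filter fun x => G.Adj x w).image fun x => (w, x)) ⊆ T2 := by
      intro p hp
      simp only [Finset.mem_biUnion, Finset.mem_image, Finset.mem_filter] at hp
      obtain ⟨w, hw, x, hx, rfl⟩ := hp
      simp only [hT2, Finset.mem_filter, Finset.mem_product]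
      exact ⟨⟨(Finset.mem_filter.mp hw).1, hx.1⟩, hx.2.symm⟩
    have hle := Finset.card_le_card hbi
    rw [Finset.card_biUnion] at hle
    · refine le_trans ?_ hle
      calc 3 * good.card = ∑ _w ∈ good, 3 := by rw [Finset.sum_const, smul_eq_mul, mul_comm]
        _ ≤ _ := by
            apply Finset.sum_le_sum
            intro w hw
            rw [Finset.card_image_of_injective _ (fun x y h => (Prod.ext_iff.mp h).2)]
            have := (Finset.mem_filter.mp hw).2
            omega
    · intro x hx y hy hxy
      rw [Function.onFun, Finset.disjoint_left]
      intro p hp hq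
      simp only [Finset.mem_image, Finset.mem_filter] at hp hq
      obtain ⟨x1, _, rfl⟩ := hp
      obtain ⟨y1, _, h⟩ := hq
      exact hxy (congrArg Prod.fst h).symm
  have hT0card : T0.card = pairCount G W' := rfl
  omega

set_option maxHeartbeats 1000000 in
theorem stmt12 (r s : ℕ) (hr : r = 2 * s + 1) (α : ℕ → ℕ)
    (hα_ex : ∀ n, ∃ Γ : Finset {A : Finset (Fin n) // A.card = r},
      IsIndep (johnson n r s) Γ ∧ Γ.card = α n)
    (hα_max : ∀ n, ∀ Γ : Finset {A : Finset (Fin n) // A.card = r},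
      IsIndep (johnson n r s) Γ → Γ.card ≤ α n)
    (hα_asymp : Filter.Tendsto
      (fun n : ℕ => (α n : ℝ) * ((r.factorial : ℝ) * ((r - s - 1).factorial : ℝ))
        / ((n : ℝ) ^ s * ((2 * r - 2 * s - 1).factorial : ℝ)))
      Filter.atTop (nhds 1))
    (l : ℕ → ℕ)
    (hl1 : Filter.Tendsto (fun n : ℕ => (l n : ℝ) / (n : ℝ) ^ (2 * s + 1))
      Filter.atTop (nhds 0))
    (hl2 : Filter.Tendsto (fun n : ℕ => (n : ℝ) ^ (2 * s) / (l n : ℝ))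
      Filter.atTop (nhds 0))
    (hlemma : ∃ C₁ : ℕ, ∀ n : ℕ, ∀ W Γ : Finset {A : Finset (Fin n) // A.card = r},
      Γ ⊆ W → IsIndep (johnson n r s) Γ →
      (∀ Γ' ⊆ W, IsIndep (johnson n r s) Γ' → Γ'.card ≤ Γ.card) →
      ((W \ Γ).filter
          (fun w => (Γ.filter (fun x => (johnson n r s).Adj x w)).card ≤ 2)).card
        ≤ C₁ * n ^ (2 * s))
    (ε : ℝ) (hε : 0 < ε) :
    ∃ N : ℕ, ∀ n ≥ N, ∀ W : Finset {A : Finset (Fin n) // A.card = r},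
      W.card = l n →
      (1 - ε) * (3 / 2) * (l n : ℝ) ^ 2 / (α n : ℝ)
        ≤ (edgeCount (johnson n r s) W : ℝ) := by

  classical
  obtain ⟨C₁, hC₁⟩ := hlemma
  have hKpos : (0:ℝ) < (r.factorial : ℝ) * ((r - s - 1).factorial : ℝ) := by positivity
  set C2 : ℝ := 2 * ((2 * r - 2 * s - 1).factorial : ℝ) /
    ((r.factorial : ℝ) * ((r - s - 1).factorial : ℝ)) with hC2def
  have hC2pos : 0 < C2 := by positivity
  set δ : ℝ := min (ε / 2) (1 / 2) with hδdef
  have hδpos : 0 < δ := lt_min (by linarith) (by norm_num)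
  have hδhalf : δ ≤ 1 / 2 := min_le_right _ _
  have hδε : δ ≤ ε / 2 := min_le_left _ _
  have hCCpos : (0:ℝ) < (C₁ : ℝ) + 2 * C2 + 1 := by positivity
  set η : ℝ := δ / ((C₁ : ℝ) + 2 * C2 + 1) with hηdef
  have hηpos : 0 < η := by rw [hηdef]; positivity
  have ev1 := hα_asymp.eventually (eventually_lt_nhds (show (1:ℝ) < 2 by norm_num))
  have ev2 := hα_asymp.eventually (eventually_gt_nhds (show (1:ℝ)/2 < 1 by norm_num))
  have ev3 := hl2.eventually (eventually_lt_nhds hηpos)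
  obtain ⟨N1, hN1⟩ := Filter.eventually_atTop.mp ((ev1.and ev2).and ev3)
  refine ⟨max N1 1, fun n hn W hW => ?_⟩
  obtain ⟨⟨hev1, hev2⟩, hev3⟩ := hN1 n (le_trans (le_max_left _ _) hn)
  have hn1 : 1 ≤ n := le_trans (le_max_right _ _) hn

  by_cases hl0 : l n = 0
  · simp only [hl0, Nat.cast_zero]
    norm_num
  have hnR : (1:ℝ) ≤ n := by exact_mod_cast hn1
  have hlposN : 0 < l n := Nat.pos_of_ne_zero hl0
  have hlpos : (0:ℝ) < l n := by exact_mod_cast hlposN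
  have hnspos : (0:ℝ) < (n:ℝ)^s := by positivity
  have hm2pos : (0:ℝ) < ((2*r-2*s-1).factorial : ℝ) := by positivity
  -- α n ≥ 1
  have hαpos : 1 ≤ α n := by
    by_contra h
    have h0 : α n = 0 := by omega
    rw [h0] at hev2
    norm_num at hev2
  have hαposR : (0:ℝ) < α n := by exact_mod_cast hαpos
  -- α n ≤ C2 * n^s
  have hαle : (α n : ℝ) ≤ C2 * (n:ℝ)^s := by
    have hd : (0:ℝ) < (n:ℝ)^s * ((2*r-2*s-1).factorial : ℝ) := by positivity
    rw [div_lt_iff₀ hd] at hev1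
    rw [hC2def, div_mul_eq_mul_div, le_div_iff₀ hKpos]
    nlinarith [hev1]
  -- n^{2s} ≤ η * l n
  have h2s : ((n:ℝ))^(2*s) ≤ η * l n := by
    rw [div_lt_iff₀ hlpos] at hev3
    linarith
  set B := C₁ * n ^ (2*s) with hBdef
  set D := B + 2 * α n with hDdef
  have hns2s : (n:ℝ)^s ≤ (n:ℝ)^(2*s) := pow_le_pow_right₀ hnR (by omega)
  have hDle : (D:ℝ) ≤ δ * l n := by
    have e1 : (D:ℝ) = (C₁:ℝ) * (n:ℝ)^(2*s) + 2 * (α n : ℝ) := by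
      rw [hDdef, hBdef]; push_cast; ring
    have e2 : (D:ℝ) ≤ ((C₁:ℝ) + 2*C2) * (n:ℝ)^(2*s) := by
      rw [e1]; nlinarith [hαle, hns2s, hC2pos]
    have e3 : ((C₁:ℝ) + 2*C2) * (n:ℝ)^(2*s) ≤ ((C₁:ℝ)+2*C2) * (η * l n) :=
      mul_le_mul_of_nonneg_left h2s (by positivity)
    have e4 : ((C₁:ℝ)+2*C2) * (η * l n) ≤ δ * l n := by
      have hle1 : ((C₁:ℝ)+2*C2) / ((C₁:ℝ)+2*C2+1) ≤ 1 := (div_le_one hCCpos).mpr (by linarith)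
      have h := mul_le_mul_of_nonneg_right hle1 (show (0:ℝ) ≤ δ * l n by positivity)
      calc ((C₁:ℝ)+2*C2) * (η * l n)
          = (((C₁:ℝ)+2*C2) / ((C₁:ℝ)+2*C2+1)) * (δ * l n) := by rw [hηdef]; ring
        _ ≤ 1 * (δ * l n) := h
        _ = δ * l n := one_mul _
    linarith
  have hDl : D ≤ l n := by
    have hhalf : δ * (l n : ℝ) ≤ (1/2) * l n := mul_le_mul_of_nonneg_right hδhalf hlpos.le
    have hr1 : (D:ℝ) ≤ (l n : ℝ) := by linarith
    exact_mod_cast hr1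
  -- main induction
  have main : ∀ m : ℕ, ∀ X : Finset {A : Finset (Fin n) // A.card = r}, X.card ≤ m →
      6 * ∑ k ∈ Finset.Ioc 0 X.card, fa (α n) B k ≤ pairCount (johnson n r s) X := by
    intro m
    induction m with
    | zero =>
      intro X hX
      have h0 : X.card = 0 := Nat.le_zero.mp hX
      rw [h0]
      simp
    | succ m ih =>
      intro X hX
      rcases Finset.eq_empty_or_nonempty X with rfl | hne
      · simp
      obtain ⟨Γ, hΓmem, hΓmax⟩ := Finset.exists_max_image
        (X.powerset.filter fun Γ => IsIndep (johnson n r s) Γ) Finset.card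
        ⟨∅, by simp [IsIndep]⟩
      rw [Finset.mem_filter, Finset.mem_powerset] at hΓmem
      obtain ⟨hΓX, hΓind⟩ := hΓmem
      have hmax' : ∀ Γ' ⊆ X, IsIndep (johnson n r s) Γ' → Γ'.card ≤ Γ.card := fun Γ' h1 h2 =>
        hΓmax Γ' (by rw [Finset.mem_filter, Finset.mem_powerset]; exact ⟨h1, h2⟩)
      have ht1 : 1 ≤ Γ.card := by
        obtain ⟨w, hw⟩ := hne
        have hsing : IsIndep (johnson n r s) {w} := by
          intro x hx y hy hadj
          rw [Finset.mem_singleton] at hx hy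
          subst hx; subst hy
          exact hadj.1 rfl
        have := hmax' {w} (Finset.singleton_subset_iff.mpr hw) hsing
        simpa using this
      have hta : Γ.card ≤ α n := hα_max n Γ hΓind
      have htm : Γ.card ≤ X.card := Finset.card_le_card hΓX
      have hcard' : (X \ Γ).card = X.card - Γ.card := Finset.card_sdiff_of_subset hΓX
      have hBle : ((X \ Γ).filter fun w =>
          (Γ.filter fun x => (johnson n r s).Adj x w).card ≤ 2).card ≤ B :=
        hC₁ n X Γ hΓX hΓind hmax'
      have hsplitcard := Finset.card_filter_add_card_filter_not
        (s := X \ Γ) (p := fun w => (Γ.filter fun x => (johnson n r s).Adj x w).card ≤ 2)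
      have hcross := cross_bound (johnson n r s) X Γ hΓX
      have hih := ih (X \ Γ) (by omega)
      rw [hcard'] at hih
      have hsplit := Finset.sum_Ioc_consecutive (fa (α n) B)
        (Nat.zero_le (X.card - Γ.card)) (Nat.sub_le X.card Γ.card)
      have htail := sum_tail (α n) B X.card Γ.card hta htm
      omega
  have hmain := main (l n) W (le_of_eq hW)
  rw [hW] at hmain
  have hedge : 3 * ∑ k ∈ Finset.Ioc 0 (l n), fa (α n) B k ≤ edgeCount (johnson n r s) W := by
    rw [edgeCount_eq]
    omega
  set M := l n - D with hMdef
  have hMD : M + D = l n := Nat.sub_add_cancel hDl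
  have hS1 : ∑ k ∈ Finset.Ioc D (l n), fa (α n) B k ≤
      ∑ k ∈ Finset.Ioc 0 (l n), fa (α n) B k :=
    Finset.sum_le_sum_of_subset (Finset.Ioc_subset_Ioc_left (Nat.zero_le D))
  have hS2 : ∑ k ∈ Finset.Ioc D (l n), (((k:ℝ) - (D:ℝ)) / (α n : ℝ)) ≤
      ((∑ k ∈ Finset.Ioc D (l n), fa (α n) B k : ℕ) : ℝ) := by
    push_cast
    apply Finset.sum_le_sum
    intro k _
    have := fa_real (α n) B k hαpos
    rw [hDdef]
    exact this
  have hS3 : ∑ k ∈ Finset.Ioc D (l n), (((k:ℝ) - (D:ℝ)) / (α n : ℝ)) =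
      ∑ j ∈ Finset.Ioc 0 M, ((j:ℝ) / (α n : ℝ)) := by
    rw [← hMD, sum_shift]
    apply Finset.sum_congr rfl
    intro j _
    push_cast
    ring
  have hgauss := gauss M
  have hS4 : ((M:ℝ) * M) / (2 * (α n : ℝ)) ≤ ∑ j ∈ Finset.Ioc 0 M, ((j:ℝ) / (α n : ℝ)) := by
    rw [← Finset.sum_div]
    have hcast : ∑ j ∈ Finset.Ioc 0 M, (j:ℝ) = ((∑ j ∈ Finset.Ioc 0 M, j : ℕ) : ℝ) := by
      push_cast; ring
    rw [hcast, div_le_div_iff₀ (by positivity) hαposR]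
    have hg : ((M:ℝ) * M) ≤ 2 * ((∑ j ∈ Finset.Ioc 0 M, j : ℕ) : ℝ) := by
      exact_mod_cast hgauss
    nlinarith [hg, hαposR]
  have hM1 : (1 - δ) * (l n : ℝ) ≤ (M : ℝ) := by
    have hMeq : (M:ℝ) = (l n : ℝ) - (D:ℝ) := by
      rw [← hMD]; push_cast; ring
    rw [hMeq]; linarith [hDle]
  have hM0 : (0:ℝ) ≤ (1 - δ) * l n := by nlinarith [hδhalf, hlpos]
  have hkey : (1 - ε) * (l n : ℝ)^2 ≤ (M:ℝ) * M := by
    rcases le_or_gt (1 - ε) 0 with h | h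
    · nlinarith [(Nat.cast_nonneg M : (0:ℝ) ≤ (M:ℝ)), sq_nonneg ((l n : ℝ))]
    · have h1 : (1 - ε) ≤ (1 - δ)^2 := by nlinarith [hδε, hδpos]
      nlinarith [hM1, hM0, sq_nonneg ((l n:ℝ))]
  have hchain : (1 - ε) * (3/2) * (l n:ℝ)^2 / (α n:ℝ) ≤ 3 * ((M:ℝ)*M) / (2*(α n:ℝ)) := by
    rw [div_le_div_iff₀ hαposR (by positivity)]
    have h2 : (0:ℝ) ≤ 3 * (α n : ℝ) := by positivity
    calc (1 - ε) * (3/2) * (l n:ℝ)^2 * (2*(α n:ℝ))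
        = (3 * (α n:ℝ)) * ((1 - ε) * (l n:ℝ)^2) := by ring
      _ ≤ (3 * (α n:ℝ)) * ((M:ℝ) * M) := mul_le_mul_of_nonneg_left hkey h2
      _ = 3 * ((M:ℝ)*M) * (α n:ℝ) := by ring
  have hcast1 : ((∑ k ∈ Finset.Ioc D (l n), fa (α n) B k : ℕ) : ℝ) ≤
      ((∑ k ∈ Finset.Ioc 0 (l n), fa (α n) B k : ℕ) : ℝ) := Nat.cast_le.mpr hS1
  calc (1 - ε) * (3 / 2) * (l n : ℝ) ^ 2 / (α n : ℝ)
      ≤ 3 * ((M:ℝ)*M) / (2*(α n:ℝ)) := hchain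
    _ ≤ 3 * ((∑ k ∈ Finset.Ioc D (l n), fa (α n) B k : ℕ) : ℝ) := by
        have hx : ((M:ℝ) * M) / (2 * (α n : ℝ)) ≤
            ((∑ k ∈ Finset.Ioc D (l n), fa (α n) B k : ℕ) : ℝ) := by
          calc ((M:ℝ) * M) / (2 * (α n : ℝ)) ≤ ∑ j ∈ Finset.Ioc 0 M, ((j:ℝ) / (α n : ℝ)) := hS4
            _ = ∑ k ∈ Finset.Ioc D (l n), (((k:ℝ) - (D:ℝ)) / (α n : ℝ)) := hS3.symm
            _ ≤ _ := hS2
        have h3eq : 3 * ((M:ℝ)*M) / (2*(α n:ℝ)) = 3 * (((M:ℝ)*M) / (2*(α n:ℝ))) := by ring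
        rw [h3eq]
        exact mul_le_mul_of_nonneg_left hx (by norm_num)
    _ ≤ 3 * ((∑ k ∈ Finset.Ioc 0 (l n), fa (α n) B k : ℕ) : ℝ) := by linarith [hcast1]
    _ ≤ (edgeCount (johnson n r s) W : ℝ) := by exact_mod_cast hedge
end

section
/- Fix r = 2s+1. Let Γ be a maximum independent set in the induced subgraph of G(n,r,s) on W, let u₁, u₂ ∈ Γ, and let w ∈ W \ Γ be adjacent to both u₁ and u₂ with |(supp(u₁) ∪ supp(u₂)) ∩ supp(w)| = k where k ≥ s+1. Then the number of such vertices w (for the fixed pair u₁, u₂) is at most 2·r·C(r,s), where C(r,s) is 'r choose s'. -/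
theorem stmt13 (n r s : ℕ) (hr : r = 2 * s + 1)
    (W Γ : Finset {A : Finset (Fin n) // A.card = r})
    (hΓW : Γ ⊆ W) (hind : IsIndep (johnson n r s) Γ)
    (hmax : ∀ Γ' ⊆ W, IsIndep (johnson n r s) Γ' → Γ'.card ≤ Γ.card)
    (u₁ u₂ : {A : Finset (Fin n) // A.card = r})
    (hu₁ : u₁ ∈ Γ) (hu₂ : u₂ ∈ Γ) (hne : u₁ ≠ u₂) :
    ((W \ Γ).filter
        (fun w => Γ.filter (fun x => (johnson n r s).Adj x w) = {u₁, u₂}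
          ∧ s + 1 ≤ ((u₁.1 ∪ u₂.1) ∩ w.1).card)).card
      ≤ 2 * r * Nat.choose r s := by
  classical
  set S := (W \ Γ).filter
        (fun w => Γ.filter (fun x => (johnson n r s).Adj x w) = {u₁, u₂}
          ∧ s + 1 ≤ ((u₁.1 ∪ u₂.1) ∩ w.1).card) with hSdef
  -- basic facts about members of S
  have hSfacts : ∀ w ∈ S, w ∈ W ∧ w ∉ Γ ∧ (u₁.1 ∩ w.1).card = s ∧ (u₂.1 ∩ w.1).card = s
      ∧ ((u₂.1 \ u₁.1) ∩ w.1).Nonempty := by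
    intro w hw
    rw [hSdef, Finset.mem_filter, Finset.mem_sdiff] at hw
    obtain ⟨⟨hwW, hwΓ⟩, hfil, hk⟩ := hw
    have h1 : (johnson n r s).Adj u₁ w := by
      have h : u₁ ∈ Γ.filter (fun x => (johnson n r s).Adj x w) := by
        rw [hfil]; simp
      exact (Finset.mem_filter.mp h).2
    have h2 : (johnson n r s).Adj u₂ w := by
      have h : u₂ ∈ Γ.filter (fun x => (johnson n r s).Adj x w) := by
        rw [hfil]; simp
      exact (Finset.mem_filter.mp h).2
    refine ⟨hwW, hwΓ, h1.2, h2.2, ?_⟩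
    rw [Finset.nonempty_iff_ne_empty]
    intro hemp
    have hsub : (u₁.1 ∪ u₂.1) ∩ w.1 ⊆ (u₁.1 ∩ w.1) ∪ ((u₂.1 \ u₁.1) ∩ w.1) := by
      intro x hx
      simp only [Finset.mem_inter, Finset.mem_union, Finset.mem_sdiff] at *
      tauto
    have hle := Finset.card_le_card hsub
    rw [hemp, Finset.union_empty, h1.2] at hle
    omega
  -- the fingerprint map
  set f : {A : Finset (Fin n) // A.card = r} → Finset (Fin n) × WithBot (Fin n) :=
    fun w => (u₁.1 ∩ w.1, ((u₂.1 \ u₁.1) ∩ w.1).min) with hf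
  -- same fingerprint ⟹ non-adjacent
  have hnonadj : ∀ x y, x ∈ S → y ∈ S → f x = f y → ¬ (johnson n r s).Adj x y := by
    intro x y hx hy hfeq hadj
    obtain ⟨_, _, hx1, _, hxne⟩ := hSfacts x hx
    obtain ⟨m, hmin⟩ := Finset.min_of_nonempty hxne
    have hmx : m ∈ (u₂.1 \ u₁.1) ∩ x.1 := Finset.mem_of_min hmin
    have hmy : m ∈ (u₂.1 \ u₁.1) ∩ y.1 := by
      apply Finset.mem_of_min
      have := congrArg Prod.snd hfeq
      simp only [hf] at this
      rw [← this, hmin]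
    have hT : u₁.1 ∩ x.1 = u₁.1 ∩ y.1 := congrArg Prod.fst hfeq
    have hsub : insert m (u₁.1 ∩ x.1) ⊆ x.1 ∩ y.1 := by
      intro a ha
      rcases Finset.mem_insert.mp ha with rfl | ha
      · exact Finset.mem_inter.mpr ⟨(Finset.mem_inter.mp hmx).2, (Finset.mem_inter.mp hmy).2⟩
      · have ha' := ha; rw [hT] at ha'
        exact Finset.mem_inter.mpr ⟨(Finset.mem_inter.mp ha).2, (Finset.mem_inter.mp ha').2⟩
    have hmnot : m ∉ u₁.1 ∩ x.1 := fun h =>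
      (Finset.mem_sdiff.mp (Finset.mem_inter.mp hmx).1).2 (Finset.mem_inter.mp h).1
    have hcard : s + 1 ≤ (x.1 ∩ y.1).card := by
      have := Finset.card_le_card hsub
      rw [Finset.card_insert_of_notMem hmnot, hx1] at this
      omega
    rw [hadj.2] at hcard
    omega
  -- adjacency to Γ from within S
  have hadjΓ : ∀ x ∈ Γ, ∀ w ∈ S, (johnson n r s).Adj x w → x = u₁ ∨ x = u₂ := by
    intro x hx w hw hadj
    rw [hSdef, Finset.mem_filter] at hw
    have h : x ∈ ({u₁, u₂} : Finset _) := by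
      rw [← hw.2.1]; exact Finset.mem_filter.mpr ⟨hx, hadj⟩
    simpa using h
  -- fibers have size at most 2
  have hfiber : ∀ a ∈ S.image f, (S.filter fun w => f w = a).card ≤ 2 := by
    intro a _
    by_contra hlt
    push_neg at hlt
    rw [Finset.two_lt_card] at hlt
    obtain ⟨w₁, hw₁, w₂, hw₂, w₃, hw₃, h12, h13, h23⟩ := hlt
    rw [Finset.mem_filter] at hw₁ hw₂ hw₃
    obtain ⟨_, hw₁Γ, _⟩ := hSfacts w₁ hw₁.1
    obtain ⟨_, hw₂Γ, _⟩ := hSfacts w₂ hw₂.1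
    obtain ⟨_, hw₃Γ, _⟩ := hSfacts w₃ hw₃.1
    set Γ' := insert w₁ (insert w₂ (insert w₃ ((Γ.erase u₁).erase u₂))) with hΓ'
    have hmemΓ' : ∀ c ∈ Γ', (c ∈ S ∧ f c = a) ∨ (c ∈ Γ ∧ c ≠ u₁ ∧ c ≠ u₂) := by
      intro c hc
      simp only [hΓ', Finset.mem_insert, Finset.mem_erase] at hc
      rcases hc with rfl | rfl | rfl | ⟨h1, h2, h3⟩
      · exact Or.inl ⟨hw₁.1, hw₁.2⟩
      · exact Or.inl ⟨hw₂.1, hw₂.2⟩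
      · exact Or.inl ⟨hw₃.1, hw₃.2⟩
      · exact Or.inr ⟨h3, h2, h1⟩
    have hΓ'W : Γ' ⊆ W := by
      intro c hc
      rcases hmemΓ' c hc with ⟨hcS, _⟩ | ⟨hcΓ, _⟩
      · exact (hSfacts c hcS).1
      · exact hΓW hcΓ
    have hΓ'ind : IsIndep (johnson n r s) Γ' := by
      intro x hx y hy hadj
      rcases hmemΓ' x hx with hx' | hx' <;> rcases hmemΓ' y hy with hy' | hy'
      · exact hnonadj x y hx'.1 hy'.1 (hx'.2.trans hy'.2.symm) hadj
      · rcases hadjΓ y hy'.1 x hx'.1 hadj.symm with rfl | rfl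
        · exact hy'.2.1 rfl
        · exact hy'.2.2 rfl
      · rcases hadjΓ x hx'.1 y hy'.1 hadj with rfl | rfl
        · exact hx'.2.1 rfl
        · exact hx'.2.2 rfl
      · exact hind x hx'.1 y hy'.1 hadj
    have hle := hmax Γ' hΓ'W hΓ'ind
    -- cardinality of Γ'
    have hu₂e : u₂ ∈ Γ.erase u₁ := Finset.mem_erase.mpr ⟨hne.symm, hu₂⟩
    have hbase : ((Γ.erase u₁).erase u₂).card = Γ.card - 2 := by
      rw [Finset.card_erase_of_mem hu₂e, Finset.card_erase_of_mem hu₁]; omega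
    have hw₃n : w₃ ∉ (Γ.erase u₁).erase u₂ := fun h =>
      hw₃Γ (Finset.mem_of_mem_erase (Finset.mem_of_mem_erase h))
    have hw₂n : w₂ ∉ insert w₃ ((Γ.erase u₁).erase u₂) := by
      intro h
      rcases Finset.mem_insert.mp h with rfl | h
      · exact h23 rfl
      · exact hw₂Γ (Finset.mem_of_mem_erase (Finset.mem_of_mem_erase h))
    have hw₁n : w₁ ∉ insert w₂ (insert w₃ ((Γ.erase u₁).erase u₂)) := by
      intro h
      rcases Finset.mem_insert.mp h with rfl | h
      · exact h12 rfl
      rcases Finset.mem_insert.mp h with rfl | h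
      · exact h13 rfl
      · exact hw₁Γ (Finset.mem_of_mem_erase (Finset.mem_of_mem_erase h))
    have hΓ'card : Γ'.card = Γ.card - 2 + 3 := by
      rw [hΓ', Finset.card_insert_of_notMem hw₁n, Finset.card_insert_of_notMem hw₂n,
        Finset.card_insert_of_notMem hw₃n, hbase]
    have hΓ2 : 2 ≤ Γ.card := by
      have : ({u₁, u₂} : Finset _) ⊆ Γ := by
        intro c hc
        rcases Finset.mem_insert.mp hc with rfl | hc
        · exact hu₁
        · rw [Finset.mem_singleton.mp hc]; exact hu₂
      have hc2 : ({u₁, u₂} : Finset _).card = 2 := Finset.card_pair hne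
      have := Finset.card_le_card this
      omega
    omega
  -- bound the image
  have himg : S.image f ⊆
      (u₁.1.powersetCard s) ×ˢ (Finset.image WithBot.some (u₂.1 \ u₁.1)) := by
    intro a ha
    obtain ⟨w, hw, rfl⟩ := Finset.mem_image.mp ha
    obtain ⟨_, _, h1, _, hne'⟩ := hSfacts w hw
    rw [Finset.mem_product]
    constructor
    · exact Finset.mem_powersetCard.mpr ⟨Finset.inter_subset_left, h1⟩
    · obtain ⟨m, hmin⟩ := Finset.min_of_nonempty hne'
      have hm := Finset.mem_of_min hmin
      simp only [hf, hmin]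
      exact Finset.mem_image.mpr ⟨m, (Finset.mem_inter.mp hm).1, rfl⟩
  have hicard : (S.image f).card ≤ Nat.choose r s * r := by
    have h1 := Finset.card_le_card himg
    rw [Finset.card_product, Finset.card_powersetCard, u₁.2,
      Finset.card_image_of_injective _ WithBot.coe_injective] at h1
    have h2 : (u₂.1 \ u₁.1).card ≤ r := by
      have := Finset.card_le_card (Finset.sdiff_subset (s := u₂.1) (t := u₁.1))
      rw [u₂.2] at this
      exact this
    calc (S.image f).card ≤ Nat.choose r s * (u₂.1 \ u₁.1).card := h1
      _ ≤ Nat.choose r s * r := Nat.mul_le_mul_left _ h2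
  calc S.card ≤ 2 * (S.image f).card := Finset.card_le_mul_card_image S 2 hfiber
    _ ≤ 2 * (Nat.choose r s * r) := Nat.mul_le_mul_left _ hicard
    _ = 2 * r * Nat.choose r s := by ring
end

section
/- Fix r = 2s+1. Let Γ be a maximum independent set in the induced subgraph of G(n,r,s) on W. For fixed u₁, u₂ ∈ Γ and for each fixed s-element set S = supp(w) ∩ (supp(u₁) ∪ supp(u₂)) in the case |(supp(u₁) ∪ supp(u₂)) ∩ supp(w)| = s, the number of vertices w ∈ W \ Γ adjacent in Γ exactly to u₁ and u₂ with that intersection pattern is at most 2n. -/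
theorem stmt14 (n r s : ℕ) (hr : r = 2 * s + 1)
    (W Γ : Finset {A : Finset (Fin n) // A.card = r})
    (hΓW : Γ ⊆ W) (hind : IsIndep (johnson n r s) Γ)
    (hmax : ∀ Γ' ⊆ W, IsIndep (johnson n r s) Γ' → Γ'.card ≤ Γ.card)
    (u₁ u₂ : {A : Finset (Fin n) // A.card = r})
    (hu₁ : u₁ ∈ Γ) (hu₂ : u₂ ∈ Γ) (hne : u₁ ≠ u₂)
    (S : Finset (Fin n)) (hS : S.card = s) :
    ((W \ Γ).filter
        (fun w => Γ.filter (fun x => (johnson n r s).Adj x w) = {u₁, u₂}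
          ∧ (u₁.1 ∪ u₂.1) ∩ w.1 = S)).card
      ≤ 2 * n := by

  classical
  set F := ((W \ Γ).filter
        (fun w => Γ.filter (fun x => (johnson n r s).Adj x w) = {u₁, u₂}
          ∧ (u₁.1 ∪ u₂.1) ∩ w.1 = S)) with hFdef
  -- properties of members of F (with an extra element x)
  have hprop : ∀ x : Fin n, ∀ w, w ∈ F.filter (fun w => x ∈ w.1 \ S) →
      w ∈ W ∧ w ∉ Γ ∧ Γ.filter (fun y => (johnson n r s).Adj y w) = {u₁, u₂}
      ∧ (u₁.1 ∪ u₂.1) ∩ w.1 = S ∧ x ∈ w.1 ∧ x ∉ S := by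
    intro x w hw
    simp only [hFdef, Finset.mem_filter, Finset.mem_sdiff] at hw
    tauto
  have key : ∀ x : Fin n, (F.filter (fun w => x ∈ w.1 \ S)).card ≤ 2 := by
    intro x
    by_contra hcon
    push_neg at hcon
    rw [Finset.two_lt_card] at hcon
    obtain ⟨w₁, hw₁, w₂, hw₂, w₃, hw₃, h12, h13, h23⟩ := hcon
    have hP₁ := hprop x w₁ hw₁
    have hP₂ := hprop x w₂ hw₂
    have hP₃ := hprop x w₃ hw₃
    -- any two such w's are non-adjacent
    have nadj : ∀ w w', (w ∈ W ∧ w ∉ Γ ∧ Γ.filter (fun y => (johnson n r s).Adj y w) = {u₁, u₂}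
        ∧ (u₁.1 ∪ u₂.1) ∩ w.1 = S ∧ x ∈ w.1 ∧ x ∉ S) →
        (w' ∈ W ∧ w' ∉ Γ ∧ Γ.filter (fun y => (johnson n r s).Adj y w') = {u₁, u₂}
        ∧ (u₁.1 ∪ u₂.1) ∩ w'.1 = S ∧ x ∈ w'.1 ∧ x ∉ S) →
        ¬ (johnson n r s).Adj w w' := by
      rintro w w' hw hw' ⟨hne', hcard⟩
      have hSw : S ⊆ w.1 := by rw [← hw.2.2.2.1]; exact Finset.inter_subset_right
      have hSw' : S ⊆ w'.1 := by rw [← hw'.2.2.2.1]; exact Finset.inter_subset_right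
      have hins : insert x S ⊆ w.1 ∩ w'.1 := by
        intro z hz
        rcases Finset.mem_insert.mp hz with rfl | hz
        · exact Finset.mem_inter.mpr ⟨hw.2.2.2.2.1, hw'.2.2.2.2.1⟩
        · exact Finset.mem_inter.mpr ⟨hSw hz, hSw' hz⟩
      have h1 : (insert x S).card = s + 1 := by
        rw [Finset.card_insert_of_notMem hw.2.2.2.2.2, hS]
      have := Finset.card_le_card hins
      omega
    -- any such w is non-adjacent to any member of Γ other than u₁, u₂
    have nadjΓ : ∀ w, (w ∈ W ∧ w ∉ Γ ∧ Γ.filter (fun y => (johnson n r s).Adj y w) = {u₁, u₂}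
        ∧ (u₁.1 ∪ u₂.1) ∩ w.1 = S ∧ x ∈ w.1 ∧ x ∉ S) →
        ∀ b ∈ Γ, b ≠ u₁ → b ≠ u₂ → ¬ (johnson n r s).Adj b w := by
      intro w hw b hb hb1 hb2 hadj
      have : b ∈ Γ.filter (fun y => (johnson n r s).Adj y w) := Finset.mem_filter.mpr ⟨hb, hadj⟩
      rw [hw.2.2.1] at this
      rcases Finset.mem_insert.mp this with h | h
      · exact hb1 h
      · exact hb2 (Finset.mem_singleton.mp h)
    set Γ' := insert w₁ (insert w₂ (insert w₃ (Γ \ {u₁, u₂}))) with hΓ'def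
    have mem_cases : ∀ a ∈ Γ', a = w₁ ∨ a = w₂ ∨ a = w₃ ∨ (a ∈ Γ ∧ a ≠ u₁ ∧ a ≠ u₂) := by
      intro a ha
      simp only [hΓ'def, Finset.mem_insert, Finset.mem_sdiff, Finset.mem_singleton] at ha
      tauto
    have hΓ'W : Γ' ⊆ W := by
      intro a ha
      rcases mem_cases a ha with rfl | rfl | rfl | ⟨haΓ, _, _⟩
      · exact hP₁.1
      · exact hP₂.1
      · exact hP₃.1
      · exact hΓW haΓ
    have hΓ'ind : IsIndep (johnson n r s) Γ' := by
      intro a ha b hb hadj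
      rcases mem_cases a ha with rfl | rfl | rfl | ⟨haΓ, ha1, ha2⟩ <;>
        rcases mem_cases b hb with rfl | rfl | rfl | ⟨hbΓ, hb1, hb2⟩
      · exact nadj _ _ hP₁ hP₁ hadj
      · exact nadj _ _ hP₁ hP₂ hadj
      · exact nadj _ _ hP₁ hP₃ hadj
      · exact nadjΓ _ hP₁ b hbΓ hb1 hb2 hadj.symm
      · exact nadj _ _ hP₂ hP₁ hadj
      · exact nadj _ _ hP₂ hP₂ hadj
      · exact nadj _ _ hP₂ hP₃ hadj
      · exact nadjΓ _ hP₂ b hbΓ hb1 hb2 hadj.symm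
      · exact nadj _ _ hP₃ hP₁ hadj
      · exact nadj _ _ hP₃ hP₂ hadj
      · exact nadj _ _ hP₃ hP₃ hadj
      · exact nadjΓ _ hP₃ b hbΓ hb1 hb2 hadj.symm
      · exact nadjΓ _ hP₁ a haΓ ha1 ha2 hadj
      · exact nadjΓ _ hP₂ a haΓ ha1 ha2 hadj
      · exact nadjΓ _ hP₃ a haΓ ha1 ha2 hadj
      · exact hind a haΓ b hbΓ hadj
    have hsub : ({u₁, u₂} : Finset _) ⊆ Γ := by
      intro z hz
      rcases Finset.mem_insert.mp hz with rfl | hz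
      · exact hu₁
      · rw [Finset.mem_singleton.mp hz]; exact hu₂
    have h2Γ : 2 ≤ Γ.card := by
      have := Finset.card_le_card hsub
      rwa [Finset.card_pair hne] at this
    have hcardΓ' : Γ'.card = Γ.card + 1 := by
      have hw₃m : w₃ ∉ Γ \ {u₁, u₂} := fun h => hP₃.2.1 (Finset.mem_sdiff.mp h).1
      have hw₂m : w₂ ∉ insert w₃ (Γ \ {u₁, u₂}) := by
        intro h
        rcases Finset.mem_insert.mp h with h | h
        · exact h23 h
        · exact hP₂.2.1 (Finset.mem_sdiff.mp h).1
      have hw₁m : w₁ ∉ insert w₂ (insert w₃ (Γ \ {u₁, u₂})) := by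
        intro h
        rcases Finset.mem_insert.mp h with h | h
        · exact h12 h
        rcases Finset.mem_insert.mp h with h | h
        · exact h13 h
        · exact hP₁.2.1 (Finset.mem_sdiff.mp h).1
      rw [hΓ'def, Finset.card_insert_of_notMem hw₁m, Finset.card_insert_of_notMem hw₂m,
        Finset.card_insert_of_notMem hw₃m, Finset.card_sdiff_of_subset hsub, Finset.card_pair hne]
      omega
    have := hmax Γ' hΓ'W hΓ'ind
    omega
  -- double counting
  have hpos : ∀ w ∈ F, 1 ≤ (w.1 \ S).card := by
    intro w hw
    rcases Finset.eq_empty_or_nonempty (w.1 \ S) with h | h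
    · exfalso
      have hsub : w.1 ⊆ S := by
        intro z hz
        by_contra hz'
        exact Finset.notMem_empty z (h ▸ Finset.mem_sdiff.mpr ⟨hz, hz'⟩)
      have := Finset.card_le_card hsub
      rw [w.2, hS] at this
      omega
    · exact Finset.card_pos.mpr h
  calc F.card = ∑ _w ∈ F, 1 := by rw [Finset.sum_const, smul_eq_mul, mul_one]
    _ ≤ ∑ w ∈ F, (w.1 \ S).card := Finset.sum_le_sum hpos
    _ = ∑ w ∈ F, ∑ y : Fin n, if y ∈ w.1 \ S then 1 else 0 := by
        refine Finset.sum_congr rfl fun w _ => ?_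
        rw [Finset.sum_ite_mem, Finset.univ_inter, Finset.sum_const, smul_eq_mul, mul_one]
    _ = ∑ y : Fin n, (F.filter (fun w => y ∈ w.1 \ S)).card := by
        rw [Finset.sum_comm]
        exact Finset.sum_congr rfl fun y _ => (Finset.card_filter _ _).symm
    _ ≤ ∑ _y : Fin n, 2 := Finset.sum_le_sum fun y _ => key y
    _ = 2 * n := by rw [Finset.sum_const, smul_eq_mul, Finset.card_univ, Fintype.card_fin]; ring
end
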